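/- arXiv:1910.06510 — 8 statements merged into one kernel-verified Lean document; each statement's English description precedes it below -/
import Mathlib

section
/- In an abelian length category, a full subcategory closed under isomorphisms is a torsion class (i.e. the first component of some torsion pair) if and only if it is closed under extensions and quotient objects. -/
open CategoryTheory CategoryTheory.Limits

universe v u

variable {C : Type u} [Category.{v} C] [Abelian C]

/-- `f, g` form a short exact sequence `0 ⟶ X₁ ⟶ X₂ ⟶ X₃ ⟶ 0`. -/
def IsSES {X₁ X₂ X₃ : C} (f : X₁ ⟶ X₂) (g : X₂ ⟶ X₃) : Prop :=
  ∃ w : f ≫ g = 0, (CategoryTheory.ShortComplex.mk f g w).ShortExact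

/-- A torsion pair `(T, F)`. -/
structure TorsionPairOn (T F : Set C) : Prop where
  hom_zero : ∀ X ∈ T, ∀ Y ∈ F, ∀ f : X ⟶ Y, f = 0
  mem_torsion : ∀ X : C, (∀ Y ∈ F, ∀ f : X ⟶ Y, f = 0) → X ∈ T
  mem_free : ∀ Y : C, (∀ X ∈ T, ∀ f : X ⟶ Y, f = 0) → Y ∈ F

def IsoClosed (S : Set C) : Prop := ∀ ⦃X Y : C⦄, (X ≅ Y) → X ∈ S → Y ∈ S

def ExtClosedSet (S : Set C) : Prop :=
  ∀ ⦃X₁ X₂ X₃ : C⦄ (f : X₁ ⟶ X₂) (g : X₂ ⟶ X₃), IsSES f g → X₁ ∈ S → X₃ ∈ S → X₂ ∈ S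

def QuotClosed (S : Set C) : Prop :=
  ∀ ⦃X Y : C⦄ (p : X ⟶ Y), Epi p → X ∈ S → Y ∈ S

structure IsTorsionClass (T : Set C) : Prop where
  zero_mem : ∀ X : C, IsZero X → X ∈ T
  iso_closed : IsoClosed T
  ext_closed : ExtClosedSet T
  quot_closed : QuotClosed T

/-- `T'` covers `T` in the lattice of torsion classes. -/
def CoversTC (T T' : Set C) : Prop :=
  T ⊆ T' ∧ T ≠ T' ∧
    ∀ S : Set C, IsTorsionClass S → T ⊆ S → S ⊆ T' → S = T ∨ S = T'

/-- The extension closure of a class of objects. -/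
inductive ExtClosure (S : Set C) : C → Prop
  | of (X : C) (h : X ∈ S) : ExtClosure S X
  | zero (X : C) (h : IsZero X) : ExtClosure S X
  | iso (X Y : C) (e : X ≅ Y) (h : ExtClosure S X) : ExtClosure S Y
  | ext (X₁ X₂ X₃ : C) (f : X₁ ⟶ X₂) (g : X₂ ⟶ X₃) (hseq : IsSES f g)
      (h₁ : ExtClosure S X₁) (h₃ : ExtClosure S X₃) : ExtClosure S X₂

def IsBrick (X : C) : Prop := ¬ IsZero X ∧ ∀ f : X ⟶ X, f = 0 ∨ IsIso f

def IsIndec (X : C) : Prop :=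
  ¬ IsZero X ∧ ∀ (Y Z : C), (X ≅ Y ⊞ Z) → IsZero Y ∨ IsZero Z

structure IsMinimalExtending (T : Set C) (M : C) : Prop where
  proper_quot_mem : ∀ ⦃Y : C⦄ (p : M ⟶ Y), Epi p → ¬ IsIso p → Y ∈ T
  ext_mem : ∀ ⦃X Tt : C⦄ (f : M ⟶ X) (g : X ⟶ Tt), IsSES f g → Tt ∈ T →
      (¬ ∃ r : X ⟶ M, f ≫ r = 𝟙 M) → X ∈ T
  hom_zero : ∀ ⦃W : C⦄, W ∈ T → ∀ f : W ⟶ M, f = 0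

/-- A finite filtration of `X` by subobjects. -/
structure FiltrationOf (X : C) where
  len : ℕ
  obj : Fin (len + 1) → C
  map : ∀ i : Fin len, obj i.castSucc ⟶ obj i.succ
  mono : ∀ i, Mono (map i)
  zero : IsZero (obj 0)
  top : obj (Fin.last len) ≅ X

noncomputable def FiltrationOf.subquot {X : C} (F : FiltrationOf X) (i : Fin F.len) : C :=
  cokernel (F.map i)

variable {P : Type*} [LinearOrder P]

def Semistable (φ : C → P) (M : C) : Prop :=
  ¬ IsZero M ∧ ∀ ⦃L : C⦄ (f : L ⟶ M), Mono f → ¬ IsZero L → φ L ≤ φ M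

def StableObj (φ : C → P) (M : C) : Prop :=
  ¬ IsZero M ∧ ∀ ⦃L : C⦄ (f : L ⟶ M), Mono f → ¬ IsZero L → ¬ IsIso f → φ L < φ M

structure IsStabilityFunction (φ : C → P) : Prop where
  iso_invariant : ∀ ⦃X Y : C⦄, (X ≅ Y) → φ X = φ Y
  seesaw : ∀ ⦃L M N : C⦄ (f : L ⟶ M) (g : M ⟶ N), IsSES f g →
      ¬ IsZero L → ¬ IsZero M → ¬ IsZero N →
      (φ L = φ M ∧ φ M = φ N) ∨ (φ L < φ M ∧ φ M < φ N) ∨ (φ N < φ M ∧ φ M < φ L)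


section AuxTorsion

variable {C : Type u} [Category.{v} C] [Abelian C]

theorem mem_torsion_of_closed [∀ X : C, IsNoetherianObject X]
    (T : Set C) (hiso : IsoClosed T)
    (hzero : ∀ X : C, IsZero X → X ∈ T)
    (hext : ExtClosedSet T) (hquot : QuotClosed T) (X : C)
    (hX : ∀ Y : C, (∀ W ∈ T, ∀ f : W ⟶ Y, f = 0) → ∀ f : X ⟶ Y, f = 0) :
    X ∈ T := by
  obtain ⟨P, hPmem, hPmax⟩ := (wellFounded_gt (α := Subobject X)).has_min
      {P : Subobject X | (P : C) ∈ T}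
      ⟨⊥, hzero _ (IsZero.of_iso (isZero_zero C) Subobject.botCoeIsoZero)⟩
  set π := cokernel.π P.arrow with hπdef
  have hQ : ∀ W ∈ T, ∀ f : W ⟶ cokernel P.arrow, f = 0 := by
    intro W hW f
    have hI : image f ∈ T := hquot (factorThruImage f) inferInstance hW
    have hfst : Mono (pullback.fst π (image.ι f)) := inferInstance
    have hsnd : Epi (pullback.snd π (image.ι f)) := inferInstance
    have hk0 : P.arrow ≫ π = (0 : (P : C) ⟶ _) ≫ image.ι f := by rw [hπdef]; simp
    set k : (P : C) ⟶ pullback π (image.ι f) := pullback.lift P.arrow 0 hk0 with hkdef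
    have hk1 : k ≫ pullback.fst π (image.ι f) = P.arrow := pullback.lift_fst _ _ _
    have hk2 : k ≫ pullback.snd π (image.ι f) = 0 := pullback.lift_snd _ _ _
    have hkmono : Mono k := mono_of_mono_fac hk1
    have hlim : IsLimit (KernelFork.ofι k hk2) := by
      refine Fork.IsLimit.mk _ (fun s => ?_) (fun s => ?_) (fun s m hm => ?_)
      · refine Abelian.monoLift P.arrow (Fork.ι s ≫ pullback.fst π (image.ι f)) ?_
        rw [Category.assoc, pullback.condition, ← Category.assoc, KernelFork.condition,
          zero_comp]
      · apply pullback.hom_ext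
        · simp [Category.assoc, hk1]
        · simp [Category.assoc, hk2, KernelFork.condition]
      · apply (cancel_mono P.arrow).1
        rw [Abelian.monoLift_comp]
        simp only [KernelFork.ι_ofι] at hm
        rw [← hm, Category.assoc, hk1]
    have hses : IsSES k (pullback.snd π (image.ι f)) :=
      ⟨hk2, { exact := (ShortComplex.mk k _ hk2).exact_of_f_is_kernel hlim,
              mono_f := hkmono, epi_g := hsnd }⟩
    have hZ : pullback π (image.ι f) ∈ T := hext k _ hses hPmem hI
    have hle : P ≤ Subobject.mk (pullback.fst π (image.ι f)) := Subobject.le_mk_of_comm k hk1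
    have hmkmem : ((Subobject.mk (pullback.fst π (image.ι f)) : Subobject X) : C) ∈ T :=
      hiso (Subobject.underlyingIso _).symm hZ
    have heq : P = Subobject.mk (pullback.fst π (image.ι f)) := by
      rcases hle.lt_or_eq with h | h
      · exact absurd h (hPmax _ hmkmem)
      · exact h
    set j : (P : C) ⟶ pullback π (image.ι f) := (Subobject.isoOfEqMk _ _ heq).hom with hjdef
    have hj1 : j ≫ pullback.fst π (image.ι f) = P.arrow := by simp [hjdef]
    have hjk : j = k := by rw [← cancel_mono (pullback.fst π (image.ι f)), hj1, hk1]
    have hkepi : Epi k := by rw [← hjk]; infer_instance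
    have hsnd0 : pullback.snd π (image.ι f) = 0 := by
      rw [← cancel_epi k, hk2, comp_zero]
    have hIzero : IsZero (image f) := by
      rw [IsZero.iff_id_eq_zero, ← cancel_epi (pullback.snd π (image.ι f)), hsnd0]
      simp
    rw [← image.fac f, hIzero.eq_of_src (image.ι f) 0, comp_zero]
  have hπ0 : π = 0 := hX _ hQ π
  have hcokzero : IsZero (cokernel P.arrow) := by
    rw [IsZero.iff_id_eq_zero, ← cancel_epi π, hπ0]; simp
  have hepi : Epi P.arrow := by
    have h0 : cokernel.π P.arrow = 0 := hcokzero.eq_of_tgt _ _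
    exact Abelian.epi_of_cokernel_π_eq_zero P.arrow h0
  have : IsIso P.arrow := isIso_of_mono_of_epi _
  exact hiso (asIso P.arrow) hPmem

end AuxTorsion


/-- in an abelian length category, a class of objects closed under
isomorphisms is a torsion class (first component of a torsion pair) if and only if
it is closed under extensions and quotient objects (and contains the zero objects). -/
theorem isTorsionClass_iff_ext_quot_closed
    {C : Type u} [Category.{v} C] [Abelian C]
    [∀ X : C, IsNoetherianObject X] [∀ X : C, IsArtinianObject X]
    (T : Set C) (hiso : IsoClosed T) :
    (∃ F : Set C, TorsionPairOn T F) ↔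
      ((∀ X : C, IsZero X → X ∈ T) ∧ ExtClosedSet T ∧ QuotClosed T) := by
  constructor
  · rintro ⟨F, hTP⟩
    refine ⟨?_, ?_, ?_⟩
    · intro X hX
      exact hTP.mem_torsion X (fun Y _ f => hX.eq_of_src f 0)
    · rintro X₁ X₂ X₃ f g ⟨w, hse⟩ h1 h3
      refine hTP.mem_torsion X₂ (fun Y hY h => ?_)
      have hfh : f ≫ h = 0 := hTP.hom_zero X₁ h1 Y hY _
      have hepi : Epi ((ShortComplex.mk f g w).g) := hse.epi_g
      let hc := hse.exact.gIsCokernel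
      have hfac : g ≫ hc.desc (CokernelCofork.ofπ h hfh) = h :=
        hc.fac (CokernelCofork.ofπ h hfh) WalkingParallelPair.one
      rw [← hfac, hTP.hom_zero X₃ h3 Y hY (hc.desc (CokernelCofork.ofπ h hfh)), comp_zero]
    · intro X Y p hp hX
      refine hTP.mem_torsion Y (fun Z hZ f => ?_)
      have : p ≫ f = 0 := hTP.hom_zero X hX Z hZ _
      rw [← cancel_epi p, this, comp_zero]
  · rintro ⟨hzero, hext, hquot⟩
    refine ⟨{Y | ∀ X ∈ T, ∀ f : X ⟶ Y, f = 0}, ?_, ?_, ?_⟩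
    · intro X hX Y hY f
      exact hY X hX f
    · intro X hX
      exact mem_torsion_of_closed T hiso hzero hext hquot X hX
    · intro Y hY
      exact hY
end

section
/- Let X be a brick (an object whose endomorphism ring is a division ring) in an abelian length category A. Then the full subcategory Filt(X) of objects admitting a finite filtration with all subquotients isomorphic to X is a wide subcategory of A, i.e. an abelian subcategory closed under extensions. -/
open CategoryTheory CategoryTheory.Limits

universe v u

variable {C : Type u} [Category.{v} C] [Abelian C]

variable {P : Type*} [LinearOrder P]

section FiltAux

open CategoryTheory.Abelian.Pseudoelement
open scoped Pseudoelement


lemma IsSES.w' {X₁ X₂ X₃ : C} {f : X₁ ⟶ X₂} {g : X₂ ⟶ X₃} (h : IsSES f g) : f ≫ g = 0 := h.1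

lemma IsSES.mono {X₁ X₂ X₃ : C} {f : X₁ ⟶ X₂} {g : X₂ ⟶ X₃} (h : IsSES f g) : Mono f :=
  h.2.mono_f

lemma IsSES.epi {X₁ X₂ X₃ : C} {f : X₁ ⟶ X₂} {g : X₂ ⟶ X₃} (h : IsSES f g) : Epi g :=
  h.2.epi_g

lemma IsSES.exact {X₁ X₂ X₃ : C} {f : X₁ ⟶ X₂} {g : X₂ ⟶ X₃} (h : IsSES f g) :
    (ShortComplex.mk f g h.1).Exact := h.2.exact

lemma IsSES.pexact {X₁ X₂ X₃ : C} {f : X₁ ⟶ X₂} {g : X₂ ⟶ X₃} (h : IsSES f g) :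
    ∀ b : X₂, g b = 0 → ∃ a : X₁, f a = b :=
  pseudo_exact_of_exact h.exact

lemma isSES_mk {X₁ X₂ X₃ : C} {f : X₁ ⟶ X₂} {g : X₂ ⟶ X₃} (w : f ≫ g = 0)
    (hm : Mono f) (he : Epi g) (hx : (ShortComplex.mk f g w).Exact) : IsSES f g :=
  ⟨w, ShortComplex.ShortExact.mk' hx hm he⟩

lemma IsSES.of_isos {X₁ X₂ X₃ Y₁ Y₂ Y₃ : C} {f : X₁ ⟶ X₂} {g : X₂ ⟶ X₃}
    (h : IsSES f g) (e₁ : X₁ ≅ Y₁) (e₂ : X₂ ≅ Y₂) (e₃ : X₃ ≅ Y₃)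
    (f' : Y₁ ⟶ Y₂) (g' : Y₂ ⟶ Y₃) (hf : e₁.hom ≫ f' = f ≫ e₂.hom)
    (hg : e₂.hom ≫ g' = g ≫ e₃.hom) : IsSES f' g' := by
  have w' : f' ≫ g' = 0 := by
    rw [← cancel_epi e₁.hom, ← Category.assoc, hf, Category.assoc, hg, ← Category.assoc,
      h.w', zero_comp, comp_zero]
  exact ⟨w', ShortComplex.shortExact_of_iso
    (ShortComplex.isoMk e₁ e₂ e₃ hf hg : ShortComplex.mk f g h.1 ≅ ShortComplex.mk f' g' w') h.2⟩



def FiltN (X : C) : ℕ → C → Prop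
  | 0, M => IsZero M
  | n+1, M => ∃ (M' : C) (i : X ⟶ M) (p : M ⟶ M'), IsSES i p ∧ FiltN X n M'

lemma FiltN.iso {X : C} : ∀ {n : ℕ} {M N : C}, FiltN X n M → (M ≅ N) → FiltN X n N := by
  intro n
  induction n with
  | zero => exact fun h e => h.of_iso e.symm
  | succ k IH =>
    rintro M N ⟨M', i, p, hses, h'⟩ e
    exact ⟨M', i ≫ e.hom, e.inv ≫ p,
      hses.of_isos (Iso.refl _) e (Iso.refl _) _ _ (by simp) (by simp), h'⟩

lemma FiltN.ext_step {X : C} {b : ℕ} {B : C} :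
    ∀ {a : ℕ} {A E : C} (f : A ⟶ E) (g : E ⟶ B),
      IsSES f g → FiltN X a A → FiltN X b B → FiltN X (a + b) E := by
  intro a
  induction a with
  | zero =>
    intro A E f g hses hA hB
    have hf0 : f = 0 := hA.eq_of_src f 0
    have hm : Mono g := ((ShortComplex.mk f g hses.1).exact_iff_mono hf0).1 hses.exact
    have he : Epi g := hses.epi
    have : IsIso g := isIso_of_mono_of_epi g
    rw [Nat.zero_add]
    exact hB.iso (asIso g).symm
  | succ k IH =>
    intro A E f g hses hA hB
    obtain ⟨A', i, p, hip, hA'⟩ := hA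
    have hmi := hip.mono
    have hmf := hses.mono
    have hmono : Mono (i ≫ f) := mono_comp i f
    have hses2 : IsSES (i ≫ f) (cokernel.π (i ≫ f)) :=
      isSES_mk (cokernel.condition _) hmono inferInstance (ShortComplex.exact_cokernel _)
    obtain ⟨f', hpf⟩ := CokernelCofork.IsColimit.desc' hip.2.gIsCokernel
      (f ≫ cokernel.π (i ≫ f)) (by rw [← Category.assoc]; exact cokernel.condition _)
    have hpf' : p ≫ f' = f ≫ cokernel.π (i ≫ f) := hpf
    set π := cokernel.π (i ≫ f) with hπ
    have g' := cokernel.desc (i ≫ f) g (by rw [Category.assoc, hses.w', comp_zero])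
    set g' : cokernel (i ≫ f) ⟶ B := cokernel.desc (i ≫ f) g
      (by rw [Category.assoc, hses.w', comp_zero]) with hg'
    have hπg' : π ≫ g' = g := cokernel.π_desc _ _ _
    have hepi := hip.epi
    -- IsSES f' g'
    have w3 : f' ≫ g' = 0 := by
      rw [← cancel_epi p, ← Category.assoc, hpf', Category.assoc, hπg', hses.w', comp_zero]
    have hmono3 : Mono f' := by
      apply mono_of_zero_of_map_zero
      intro a ha
      obtain ⟨x, rfl⟩ := pseudo_surjective_of_epi p a
      have h1 : π (f x) = 0 := by
        rw [← Abelian.Pseudoelement.comp_apply, ← hpf', Abelian.Pseudoelement.comp_apply, ha]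
      obtain ⟨t, ht⟩ := hses2.pexact _ h1
      have ht' : f (i t) = f x := by rw [← Abelian.Pseudoelement.comp_apply]; exact ht
      have := pseudo_injective_of_mono f ht'
      rw [← this, ← Abelian.Pseudoelement.comp_apply, hip.w', Abelian.Pseudoelement.zero_apply]
    have hepi3 : Epi g' := by
      have : Epi (π ≫ g') := by rw [hπg']; exact hses.epi
      exact epi_of_epi π g'
    have hex3 : (ShortComplex.mk f' g' w3).Exact := by
      apply exact_of_pseudo_exact
      intro b hb
      obtain ⟨e, rfl⟩ := pseudo_surjective_of_epi π b
      have hb' : pseudoApply g' (pseudoApply π e) = 0 := hb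
      have hge : g e = 0 := by
        rw [← hπg', Abelian.Pseudoelement.comp_apply]; exact hb'
      obtain ⟨a, ha⟩ := hses.pexact _ hge
      refine ⟨p a, ?_⟩
      show f' (p a) = _
      rw [← Abelian.Pseudoelement.comp_apply, hpf', Abelian.Pseudoelement.comp_apply, ha]
    have hses3 : IsSES f' g' := isSES_mk w3 hmono3 hepi3 hex3
    have hE' : FiltN X (k + b) (cokernel (i ≫ f)) := IH f' g' hses3 hA' hB
    have : k + 1 + b = (k + b) + 1 := by omega
    rw [this]
    exact ⟨cokernel (i ≫ f), i ≫ f, π, hses2, hE'⟩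

open ZeroObject in
lemma filtN_one (X : C) : FiltN X 1 X := by
  refine ⟨0, 𝟙 X, 0, ⟨by simp, ShortComplex.ShortExact.mk' ?_ inferInstance ?_⟩, isZero_zero C⟩
  · exact ((ShortComplex.mk (𝟙 X) (0 : X ⟶ 0) (by simp)).exact_iff_epi rfl).2 inferInstance
  · exact ⟨fun u v _ => (isZero_zero C).eq_of_src u v⟩

lemma extClosure_iff_filtN (X : C) (M : C) : ExtClosure {X} M ↔ ∃ n, FiltN X n M := by
  constructor
  · intro h
    induction h with
    | of Y hY => exact ⟨1, by rw [show Y = X from hY]; exact filtN_one X⟩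
    | zero Y hY => exact ⟨0, hY⟩
    | iso Y Z e _ ih => obtain ⟨n, hn⟩ := ih; exact ⟨n, hn.iso e⟩
    | ext X₁ X₂ X₃ f g hseq _ _ ih₁ ih₃ =>
      obtain ⟨a, ha⟩ := ih₁
      obtain ⟨b, hb⟩ := ih₃
      exact ⟨a + b, FiltN.ext_step f g hseq ha hb⟩
  · rintro ⟨n, hn⟩
    induction n generalizing M with
    | zero => exact ExtClosure.zero M hn
    | succ k IH =>
      obtain ⟨M', i, p, hses, h'⟩ := hn
      exact ExtClosure.ext X M M' i p hses (ExtClosure.of X rfl) (IH M' h')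

lemma mono_coker_of_ne_zero {X : C} (hX : IsBrick X) :
    ∀ (n : ℕ) (N : C), FiltN X n N → ∀ g : X ⟶ N, g ≠ 0 →
      Mono g ∧ ∃ m, m + 1 = n ∧ FiltN X m (cokernel g) := by
  intro n
  induction n with
  | zero => intro N hN g hg; exact absurd (hN.eq_of_tgt g 0) hg
  | succ k IH =>
    intro N hN g hg
    obtain ⟨N', j, q, hjq, hN'⟩ := hN
    have hmj := hjq.mono
    have heq := hjq.epi
    by_cases hz : g ≫ q = 0
    · obtain ⟨h, hh⟩ := KernelFork.IsLimit.lift' hjq.2.fIsKernel g hz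
      have hh' : h ≫ j = g := by simpa using hh
      have hne : h ≠ 0 := fun h0 => hg (by rw [← hh', h0, zero_comp])
      have hiso : IsIso h := (hX.2 h).resolve_left hne
      constructor
      · rw [← hh']; exact mono_comp h j
      · refine ⟨k, rfl, ?_⟩
        have e1 : cokernel g ≅ cokernel j :=
          (cokernelIsoOfEq hh'.symm).trans (cokernelEpiComp h j)
        have e2 : cokernel j ≅ N' :=
          IsColimit.coconePointUniqueUpToIso (cokernelIsCokernel j) hjq.2.gIsCokernel
        exact hN'.iso (e1.trans e2).symm
    · obtain ⟨hm, m, hmk, hcoker⟩ := IH N' hN' (g ≫ q) hz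
      have hmono : Mono g := mono_of_mono g q
      refine ⟨hmono, m + 1, by omega, ?_⟩
      set u : X ⟶ cokernel g := j ≫ cokernel.π g with hu
      set v : cokernel g ⟶ cokernel (g ≫ q) :=
        cokernel.desc g (q ≫ cokernel.π (g ≫ q))
          (by rw [← Category.assoc]; exact cokernel.condition _) with hv
      have hπv : cokernel.π g ≫ v = q ≫ cokernel.π (g ≫ q) := cokernel.π_desc _ _ _
      have w : u ≫ v = 0 := by
        rw [hu, Category.assoc, hπv, ← Category.assoc, hjq.w', zero_comp]
      have hmonou : Mono u := by
        apply mono_of_zero_of_map_zero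
        intro t ht
        have h1 : pseudoApply (cokernel.π g) (pseudoApply j t) = 0 := by
          rw [← Abelian.Pseudoelement.comp_apply]; exact ht
        obtain ⟨s, hs⟩ := pseudo_exact_of_exact (ShortComplex.exact_cokernel g) _ h1
        have h2 : pseudoApply (g ≫ q) s = 0 := by
          rw [Abelian.Pseudoelement.comp_apply, hs, ← Abelian.Pseudoelement.comp_apply,
            hjq.w', Abelian.Pseudoelement.zero_apply]
        have hs0 : s = 0 := zero_of_map_zero _ (pseudo_injective_of_mono (g ≫ q)) s h2
        have : pseudoApply j t = 0 := by rw [← hs, hs0, apply_zero]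
        exact zero_of_map_zero _ (pseudo_injective_of_mono j) t this
      have hepiv : Epi v := by
        have : Epi (cokernel.π g ≫ v) := by rw [hπv]; infer_instance
        exact epi_of_epi (cokernel.π g) v
      have hexuv : (ShortComplex.mk u v w).Exact := by
        apply exact_of_pseudo_exact
        intro b hb
        obtain ⟨e, rfl⟩ := pseudo_surjective_of_epi (cokernel.π g) b
        have hb' : pseudoApply v (pseudoApply (cokernel.π g) e) = 0 := hb
        have h1 : pseudoApply (cokernel.π (g ≫ q)) (pseudoApply q e) = 0 := by
          rw [← Abelian.Pseudoelement.comp_apply, ← hπv, Abelian.Pseudoelement.comp_apply]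
          exact hb'
        obtain ⟨s, hs⟩ := pseudo_exact_of_exact (ShortComplex.exact_cokernel (g ≫ q)) _ h1
        have hs' : pseudoApply q e = pseudoApply q (pseudoApply g s) := by
          rw [← Abelian.Pseudoelement.comp_apply]; exact hs.symm
        obtain ⟨z, hz0, hzp⟩ := sub_of_eq_image q e (pseudoApply g s) hs'
        have hgs : pseudoApply (cokernel.π g) (pseudoApply g s) = 0 := by
          rw [← Abelian.Pseudoelement.comp_apply, cokernel.condition, Abelian.Pseudoelement.zero_apply]
        have hze : pseudoApply (cokernel.π g) z = pseudoApply (cokernel.π g) e :=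
          hzp _ (cokernel.π g) hgs
        obtain ⟨t, ht⟩ := hjq.pexact z hz0
        refine ⟨t, ?_⟩
        show pseudoApply u t = _
        rw [hu, Abelian.Pseudoelement.comp_apply, ht, hze]
      exact ⟨cokernel (g ≫ q), u, v, isSES_mk w hmonou hepiv hexuv, hcoker⟩

lemma zero_case {X : C} {m n : ℕ} {M N : C} (f : M ⟶ N) (hf : f = 0)
    (hM : FiltN X m M) (hN : FiltN X n N) :
    (∃ k, FiltN X k (kernel f)) ∧ (∃ k, FiltN X k (cokernel f)) := by
  constructor
  · exact ⟨m, hM.iso ((kernelIsoOfEq hf).trans kernelZeroIsoSource).symm⟩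
  · exact ⟨n, hN.iso ((cokernelIsoOfEq hf).trans cokernelZeroIsoTarget).symm⟩

lemma main_lemma {X : C} (hX : IsBrick X) :
    ∀ (s m n : ℕ) (M N : C) (f : M ⟶ N), m + n ≤ s → FiltN X m M → FiltN X n N →
      (∃ k, FiltN X k (kernel f)) ∧ (∃ k, FiltN X k (cokernel f)) := by
  intro s
  induction s with
  | zero =>
    intro m n M N f hs hM hN
    have hm0 : m = 0 := by omega
    subst hm0
    exact zero_case f (hM.eq_of_src f 0) hM hN
  | succ s IH =>
    intro m n M N f hs hM hN
    by_cases hf : f = 0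
    · exact zero_case f hf hM hN
    have hm1 : m ≠ 0 := by
      intro h0; subst h0; exact hf (hM.eq_of_src f 0)
    obtain ⟨m', rfl⟩ : ∃ m', m = m' + 1 := ⟨m - 1, by omega⟩
    obtain ⟨M', i, p, hip, hM'⟩ := hM
    have hmi := hip.mono
    have hepi := hip.epi
    by_cases hg : i ≫ f = 0
    · -- f factors through p
      obtain ⟨f', hpf⟩ := CokernelCofork.IsColimit.desc' hip.2.gIsCokernel f hg
      have hpf' : p ≫ f' = f := hpf
      obtain ⟨⟨k₁, hk₁⟩, ⟨k₂, hk₂⟩⟩ := IH m' n M' N f' (by omega) hM' hN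
      constructor
      · -- SES X ⟶ kernel f ⟶ kernel f'
        set j : X ⟶ kernel f := kernel.lift f i hg with hj
        set κ : kernel f ⟶ kernel f' :=
          kernel.lift f' (kernel.ι f ≫ p) (by rw [Category.assoc, hpf', kernel.condition])
          with hκ
        have hjι : j ≫ kernel.ι f = i := kernel.lift_ι _ _ _
        have hκι : κ ≫ kernel.ι f' = kernel.ι f ≫ p := kernel.lift_ι _ _ _
        have w : j ≫ κ = 0 := by
          rw [← cancel_mono (kernel.ι f'), Category.assoc, hκι, ← Category.assoc, hjι,
            hip.w', zero_comp]
        have hmonoj : Mono j := by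
          have : Mono (j ≫ kernel.ι f) := by rw [hjι]; exact hmi
          exact mono_of_mono j (kernel.ι f)
        have hepik : Epi κ := by
          apply epi_of_pseudo_surjective
          intro b
          have hb : pseudoApply f' (pseudoApply (kernel.ι f') b) = 0 := by
            rw [← Abelian.Pseudoelement.comp_apply, kernel.condition, Abelian.Pseudoelement.zero_apply]
          obtain ⟨x, hx⟩ := pseudo_surjective_of_epi p (pseudoApply (kernel.ι f') b)
          have hfx : pseudoApply f x = 0 := by
            rw [← hpf', Abelian.Pseudoelement.comp_apply, hx, hb]
          obtain ⟨a, ha⟩ := pseudo_exact_of_exact (ShortComplex.exact_kernel f) _ hfx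
          refine ⟨a, ?_⟩
          apply pseudo_injective_of_mono (kernel.ι f')
          show pseudoApply (kernel.ι f') (pseudoApply κ a) = _
          rw [← Abelian.Pseudoelement.comp_apply, hκι, Abelian.Pseudoelement.comp_apply,
            ha, hx]
        have hex : (ShortComplex.mk j κ w).Exact := by
          apply exact_of_pseudo_exact
          intro z hz
          have hz' : pseudoApply κ z = 0 := hz
          have h1 : pseudoApply p (pseudoApply (kernel.ι f) z) = 0 := by
            rw [← Abelian.Pseudoelement.comp_apply, ← hκι, Abelian.Pseudoelement.comp_apply,
              hz', apply_zero]
          obtain ⟨t, ht⟩ := hip.pexact _ h1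
          refine ⟨t, ?_⟩
          apply pseudo_injective_of_mono (kernel.ι f)
          show pseudoApply (kernel.ι f) (pseudoApply j t) = _
          rw [← Abelian.Pseudoelement.comp_apply, hjι, ht]
        exact ⟨k₁ + 1, kernel f', j, κ, isSES_mk w hmonoj hepik hex, hk₁⟩
      · refine ⟨k₂, hk₂.iso ?_⟩
        exact ((cokernelIsoOfEq hpf'.symm).trans (cokernelEpiComp p f')).symm
    · -- i ≫ f ≠ 0
      obtain ⟨hgm, n₁, hn₁, hcok⟩ := mono_coker_of_ne_zero hX n N hN (i ≫ f) hg
      obtain ⟨f', hpf⟩ := CokernelCofork.IsColimit.desc' hip.2.gIsCokernel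
        (f ≫ cokernel.π (i ≫ f)) (by rw [← Category.assoc]; exact cokernel.condition _)
      have hpf' : p ≫ f' = f ≫ cokernel.π (i ≫ f) := hpf
      obtain ⟨⟨k₁, hk₁⟩, ⟨k₂, hk₂⟩⟩ := IH m' n₁ M' (cokernel (i ≫ f)) f' (by omega) hM' hcok
      constructor
      · -- kernel f ≅ kernel f'
        set κ : kernel f ⟶ kernel f' :=
          kernel.lift f' (kernel.ι f ≫ p)
            (by rw [Category.assoc, hpf', ← Category.assoc, kernel.condition, zero_comp])
          with hκ
        have hκι : κ ≫ kernel.ι f' = kernel.ι f ≫ p := kernel.lift_ι _ _ _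
        have hmono : Mono κ := by
          apply mono_of_zero_of_map_zero
          intro a ha
          have h1 : pseudoApply p (pseudoApply (kernel.ι f) a) = 0 := by
            rw [← Abelian.Pseudoelement.comp_apply, ← hκι, Abelian.Pseudoelement.comp_apply,
              ha, apply_zero]
          obtain ⟨t, ht⟩ := hip.pexact _ h1
          have h2 : pseudoApply (i ≫ f) t = 0 := by
            rw [Abelian.Pseudoelement.comp_apply, ht, ← Abelian.Pseudoelement.comp_apply,
              kernel.condition, Abelian.Pseudoelement.zero_apply]
          have ht0 : t = 0 := zero_of_map_zero _ (pseudo_injective_of_mono (i ≫ f)) t h2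
          have : pseudoApply (kernel.ι f) a = 0 := by rw [← ht, ht0, apply_zero]
          exact zero_of_map_zero _ (pseudo_injective_of_mono (kernel.ι f)) a this
        have hepi2 : Epi κ := by
          apply epi_of_pseudo_surjective
          intro b
          obtain ⟨x, hx⟩ := pseudo_surjective_of_epi p (pseudoApply (kernel.ι f') b)
          have h1 : pseudoApply (cokernel.π (i ≫ f)) (pseudoApply f x) = 0 := by
            rw [← Abelian.Pseudoelement.comp_apply, ← hpf', Abelian.Pseudoelement.comp_apply,
              hx, ← Abelian.Pseudoelement.comp_apply, kernel.condition, Abelian.Pseudoelement.zero_apply]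
          obtain ⟨t, ht⟩ := pseudo_exact_of_exact (ShortComplex.exact_cokernel (i ≫ f)) _ h1
          have ht' : pseudoApply f x = pseudoApply f (pseudoApply i t) := by
            rw [← Abelian.Pseudoelement.comp_apply]; exact ht.symm
          obtain ⟨z, hz0, hzp⟩ := sub_of_eq_image f x (pseudoApply i t) ht'
          have hpit : pseudoApply p (pseudoApply i t) = 0 := by
            rw [← Abelian.Pseudoelement.comp_apply, hip.w', Abelian.Pseudoelement.zero_apply]
          have hpz : pseudoApply p z = pseudoApply p x := hzp _ p hpit
          obtain ⟨a, ha⟩ := pseudo_exact_of_exact (ShortComplex.exact_kernel f) _ hz0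
          refine ⟨a, ?_⟩
          apply pseudo_injective_of_mono (kernel.ι f')
          show pseudoApply (kernel.ι f') (pseudoApply κ a) = _
          rw [← Abelian.Pseudoelement.comp_apply, hκι, Abelian.Pseudoelement.comp_apply,
            ha, hpz, hx]
        have : IsIso κ := isIso_of_mono_of_epi κ
        exact ⟨k₁, hk₁.iso (asIso κ).symm⟩
      · -- cokernel f ≅ cokernel f'
        set γ : cokernel f ⟶ cokernel f' :=
          cokernel.desc f (cokernel.π (i ≫ f) ≫ cokernel.π f')
            (by rw [← Category.assoc, ← hpf', Category.assoc, cokernel.condition, comp_zero])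
          with hγ
        have hπγ : cokernel.π f ≫ γ = cokernel.π (i ≫ f) ≫ cokernel.π f' :=
          cokernel.π_desc _ _ _
        have hepi2 : Epi γ := by
          have : Epi (cokernel.π f ≫ γ) := by rw [hπγ]; exact epi_comp _ _
          exact epi_of_epi (cokernel.π f) γ
        have hmono2 : Mono γ := by
          apply mono_of_zero_of_map_zero
          intro a ha
          obtain ⟨y, rfl⟩ := pseudo_surjective_of_epi (cokernel.π f) a
          have h1 : pseudoApply (cokernel.π f') (pseudoApply (cokernel.π (i ≫ f)) y) = 0 := by
            rw [← Abelian.Pseudoelement.comp_apply, ← hπγ, Abelian.Pseudoelement.comp_apply]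
            exact ha
          obtain ⟨w', hw'⟩ := pseudo_exact_of_exact (ShortComplex.exact_cokernel f') _ h1
          obtain ⟨x, hx⟩ := pseudo_surjective_of_epi p w'
          have h2 : pseudoApply (cokernel.π (i ≫ f)) y =
              pseudoApply (cokernel.π (i ≫ f)) (pseudoApply f x) := by
            rw [← hw', ← hx, ← Abelian.Pseudoelement.comp_apply, hpf',
              Abelian.Pseudoelement.comp_apply]
          obtain ⟨z, hz0, hzp⟩ := sub_of_eq_image (cokernel.π (i ≫ f)) y
            (pseudoApply f x) h2
          have hfx : pseudoApply (cokernel.π f) (pseudoApply f x) = 0 := by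
            rw [← Abelian.Pseudoelement.comp_apply, cokernel.condition, Abelian.Pseudoelement.zero_apply]
          have hπz : pseudoApply (cokernel.π f) z = pseudoApply (cokernel.π f) y :=
            hzp _ (cokernel.π f) hfx
          obtain ⟨t, ht⟩ := pseudo_exact_of_exact (ShortComplex.exact_cokernel (i ≫ f)) _ hz0
          have : pseudoApply (cokernel.π f) z = 0 := by
            rw [← ht, ← Abelian.Pseudoelement.comp_apply]
            show pseudoApply ((i ≫ f) ≫ cokernel.π f) t = 0
            rw [Category.assoc, cokernel.condition, comp_zero, Abelian.Pseudoelement.zero_apply]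
          rw [← hπz, this]
        have : IsIso γ := isIso_of_mono_of_epi γ
        exact ⟨k₂, hk₂.iso (asIso γ).symm⟩

end FiltAux

/-- if `X` is a brick in an abelian length category, then `Filt(X)`,
the objects filtered by copies of `X`, form a wide subcategory: closed under
kernels, cokernels and extensions. -/
theorem filt_of_brick_is_wide
    {C : Type u} [Category.{v} C] [Abelian C]
    [∀ X : C, IsNoetherianObject X] [∀ X : C, IsArtinianObject X]
    (X : C) (hX : IsBrick X) :
    (∀ (A B : C) (f : A ⟶ B), ExtClosure {X} A → ExtClosure {X} B →
        ExtClosure {X} (kernel f) ∧ ExtClosure {X} (cokernel f)) ∧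
    ExtClosedSet {M : C | ExtClosure {X} M} := by
  constructor
  · intro A B f hA hB
    obtain ⟨m, hm⟩ := (extClosure_iff_filtN X A).1 hA
    obtain ⟨n, hn⟩ := (extClosure_iff_filtN X B).1 hB
    obtain ⟨⟨k₁, h₁⟩, ⟨k₂, h₂⟩⟩ := main_lemma hX (m + n) m n A B f le_rfl hm hn
    exact ⟨(extClosure_iff_filtN X _).2 ⟨k₁, h₁⟩, (extClosure_iff_filtN X _).2 ⟨k₂, h₂⟩⟩
  · intro X₁ X₂ X₃ f g h h₁ h₃
    exact ExtClosure.ext X₁ X₂ X₃ f g h h₁ h₃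
end

section
/- Let T be a torsion class in an abelian length category and M ∉ T an indecomposable object each of whose proper quotients lies in T. Let N ∈ Filt(T ∪ {M}) ∖ T be such that each proper quotient of N lies in T. If Filt(T ∪ {M}) covers T in the lattice of torsion classes, then M ≅ N. -/
open CategoryTheory CategoryTheory.Limits

universe v u

variable {C : Type u} [Category.{v} C] [Abelian C]

variable {P : Type*} [LinearOrder P]

namespace CoverUniqueAux


lemma isSES_of_isLimit {K A B : C} (g : A ⟶ B) [Epi g] (i : K ⟶ A) [Mono i] (w : i ≫ g = 0)
    (h : IsLimit (KernelFork.ofι i w)) : IsSES i g :=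
  ⟨w, { exact := (ShortComplex.mk i g w).exact_of_f_is_kernel h,
        mono_f := ‹Mono i›, epi_g := ‹Epi g› }⟩

lemma isSES_of_mono {A B : C} (m : A ⟶ B) [Mono m] : IsSES m (cokernel.π m) :=
  ⟨cokernel.condition m,
   { exact := (ShortComplex.mk m (cokernel.π m)
        (cokernel.condition m)).exact_of_g_is_cokernel (cokernelIsCokernel m),
     mono_f := ‹Mono m›, epi_g := inferInstance }⟩

lemma isZero_of_epi_zero {X Y : C} (p : X ⟶ Y) [Epi p] (h : p = 0) : IsZero Y := by
  rw [IsZero.iff_id_eq_zero, ← cancel_epi p, h]; simp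

lemma isZero_of_epi_of_isZero {X Y : C} (p : X ⟶ Y) [Epi p] (h : IsZero X) : IsZero Y :=
  isZero_of_epi_zero p (h.eq_of_src p 0)

lemma isIso_of_mono_endo {X : C} [IsArtinianObject X] (h : X ⟶ X) [Mono h] : IsIso h := by
  by_contra hn
  have hlt : Subobject.mk h < ⊤ :=
    lt_of_le_of_ne le_top (fun e => hn ((Subobject.isIso_iff_mk_eq_top h).2 e))
  set Φ : Subobject X → Subobject X := (Subobject.map h).obj with hΦ
  have hmono : Monotone Φ := (Subobject.map h).monotone
  have hinj : Function.Injective Φ := fun A B e => by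
    have := congrArg (Subobject.pullback h).obj e
    simpa [hΦ, Subobject.pullback_map_self] using this
  have hstrict : StrictMono Φ := hmono.strictMono_of_injective hinj
  have key : ∀ n, Φ^[n + 1] ⊤ < Φ^[n] ⊤ := by
    intro n
    induction n with
    | zero => simpa [hΦ, Subobject.map_top] using hlt
    | succ n ih =>
        rw [Function.iterate_succ_apply' Φ (n + 1) ⊤]
        exact (hstrict ih).trans_eq (Function.iterate_succ_apply' Φ n ⊤).symm
  obtain ⟨_, ⟨n, rfl⟩, hmin⟩ :=
    (wellFounded_lt (α := Subobject X)).has_min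
      (Set.range fun n => Φ^[n] ⊤) ⟨_, ⟨0, rfl⟩⟩
  exact hmin _ ⟨n + 1, rfl⟩ (key n)

def TFree (T : Set C) : Set C := {Y | ∀ X ∈ T, ∀ f : X ⟶ Y, f = 0}

lemma tfree_of_mono {T : Set C} {Y' Y : C} (m : Y' ⟶ Y) [Mono m] (hY : Y ∈ TFree T) :
    Y' ∈ TFree T := fun W hW f => by
  rw [← cancel_mono m, zero_comp]
  exact hY W hW (f ≫ m)

lemma tfree_iso {T : Set C} {Y Y' : C} (e : Y ≅ Y') (hY : Y ∈ TFree T) : Y' ∈ TFree T :=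
  fun W hW f => by
    have := hY W hW (f ≫ e.inv)
    rw [← Category.comp_id f, ← e.inv_hom_id, ← Category.assoc, this, zero_comp]

lemma isZero_of_t_tf {T : Set C} {X : C} (hX : X ∈ T) (hX' : X ∈ TFree T) : IsZero X := by
  rw [IsZero.iff_id_eq_zero]; exact hX' X hX (𝟙 X)

lemma mem_tfree_of_proper_quot {T : Set C} (hT : IsTorsionClass T) (X : C) [IsNoetherianObject X]
    (hX : X ∉ T) (hq : ∀ ⦃Y : C⦄ (p : X ⟶ Y), Epi p → ¬ IsIso p → Y ∈ T) : X ∈ TFree T := by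
  obtain ⟨t, htT, hmax⟩ :=
    (wellFounded_gt (α := Subobject X)).has_min {A : Subobject X | (A : C) ∈ T}
      ⟨⊥, hT.zero_mem _ ((isZero_zero C).of_iso Subobject.botCoeIsoZero)⟩
  have hQF : (cokernel t.arrow) ∈ TFree T := by
    intro W hW φ
    by_contra hφ
    have hIT : Abelian.image φ ∈ T := hT.quot_closed (Abelian.factorThruImage φ) inferInstance hW
    have hInz : ¬ IsZero (Abelian.image φ) := by
      intro h0
      exact hφ (by rw [← Abelian.image.fac φ, h0.eq_of_src (Abelian.image.ι φ) 0, comp_zero])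
    have hj0 : t.arrow ≫ cokernel.π t.arrow
        = (0 : (t : C) ⟶ Abelian.image φ) ≫ Abelian.image.ι φ := by
      simp [cokernel.condition]
    have hjfst : pullback.lift t.arrow 0 hj0 ≫ pullback.fst (cokernel.π t.arrow) (Abelian.image.ι φ)
        = t.arrow := pullback.lift_fst _ _ _
    have hjsnd : pullback.lift t.arrow 0 hj0 ≫ pullback.snd (cokernel.π t.arrow) (Abelian.image.ι φ)
        = 0 := pullback.lift_snd _ _ _
    haveI : Mono (pullback.lift t.arrow 0 hj0) := by
      have : Mono (pullback.lift t.arrow 0 hj0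
          ≫ pullback.fst (cokernel.π t.arrow) (Abelian.image.ι φ)) := by
        rw [hjfst]; infer_instance
      exact mono_of_mono (pullback.lift t.arrow 0 hj0) (pullback.fst (cokernel.π t.arrow) (Abelian.image.ι φ))
    have hkq := Abelian.monoIsKernelOfCokernel
      (CokernelCofork.ofπ (cokernel.π t.arrow) (cokernel.condition t.arrow))
      (cokernelIsCokernel t.arrow)
    have hlim : IsLimit (KernelFork.ofι (pullback.lift t.arrow 0 hj0) hjsnd) := by
      refine KernelFork.IsLimit.ofι' _ hjsnd (fun {A} k hk => ?_)
      have hkq0 : (k ≫ pullback.fst (cokernel.π t.arrow) (Abelian.image.ι φ))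
          ≫ cokernel.π t.arrow = 0 := by
        rw [Category.assoc, pullback.condition, ← Category.assoc, hk, zero_comp]
      obtain ⟨l, hl⟩ := KernelFork.IsLimit.lift' hkq _ hkq0
      refine ⟨l, ?_⟩
      apply pullback.hom_ext
      · rw [Category.assoc, hjfst]
        exact hl
      · rw [Category.assoc, hjsnd, comp_zero, hk]
    have hPT : pullback (cokernel.π t.arrow) (Abelian.image.ι φ) ∈ T :=
      hT.ext_closed _ _ (isSES_of_isLimit _ _ hjsnd hlim) htT hIT
    have hmem : Subobject.mk (pullback.fst (cokernel.π t.arrow) (Abelian.image.ι φ))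
        ∈ {A : Subobject X | (A : C) ∈ T} :=
      hT.iso_closed (Subobject.underlyingIso _).symm hPT
    have hle : t ≤ Subobject.mk (pullback.fst (cokernel.π t.arrow) (Abelian.image.ι φ)) := by
      conv_lhs => rw [← Subobject.mk_arrow t]
      exact Subobject.mk_le_mk_of_comm _ hjfst
    rcases hle.lt_or_eq with hlt | heq
    · exact hmax _ hmem hlt
    · have hle' : Subobject.mk (pullback.fst (cokernel.π t.arrow) (Abelian.image.ι φ))
          ≤ Subobject.mk t.arrow :=
        heq.ge.trans (le_of_eq (Subobject.mk_arrow t).symm)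
      have hcomp := Subobject.ofMkLEMk_comp hle'
      have hz : pullback.snd (cokernel.π t.arrow) (Abelian.image.ι φ) ≫ Abelian.image.ι φ = 0 := by
        rw [← pullback.condition, ← hcomp, Category.assoc, cokernel.condition, comp_zero]
      have hsnd0 : pullback.snd (cokernel.π t.arrow) (Abelian.image.ι φ) = 0 :=
        zero_of_comp_mono _ hz
      haveI : Epi (pullback.snd (cokernel.π t.arrow) (Abelian.image.ι φ)) :=
        Abelian.epi_pullback_of_epi_f _ _
      exact hInz (isZero_of_epi_zero _ hsnd0)
  by_cases hiso : IsIso (cokernel.π t.arrow)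
  · exact tfree_iso (asIso (cokernel.π t.arrow)).symm hQF
  · have hQT : cokernel t.arrow ∈ T := hq (cokernel.π t.arrow) inferInstance hiso
    have hQz : IsZero (cokernel t.arrow) := isZero_of_t_tf hQT hQF
    haveI : Epi t.arrow := by
      constructor
      intro W u v huv
      have hs : t.arrow ≫ (u - v) = 0 := by rw [Preadditive.comp_sub, huv, sub_self]
      have hfac := cokernel.π_desc t.arrow (u - v) hs
      have : u - v = 0 := by
        rw [← hfac, hQz.eq_of_src (cokernel.desc t.arrow (u - v) hs) 0, comp_zero]
      exact sub_eq_zero.mp this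
    haveI : IsIso t.arrow := isIso_of_mono_of_epi t.arrow
    exact absurd (hT.iso_closed (asIso t.arrow) htT) hX

lemma exists_nonzero_hom {T : Set C} (hT : IsTorsionClass T) (M : C)
    (X : C) (hX : ExtClosure (T ∪ {M}) X) :
    X ∈ TFree T → ¬ IsZero X → ∃ f : M ⟶ X, f ≠ 0 := by
  induction hX with
  | of X h =>
      intro hF hnz
      rcases h with h | h
      · exact absurd (isZero_of_t_tf h hF) hnz
      · rcases h with rfl
        exact ⟨𝟙 X, fun e => hnz (by rw [IsZero.iff_id_eq_zero]; exact e)⟩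
  | zero X h => intro _ hnz; exact absurd h hnz
  | iso X Y e h ih =>
      intro hF hnz
      obtain ⟨f, hf⟩ := ih (tfree_iso e.symm hF) (fun h0 => hnz (h0.of_iso e.symm))
      refine ⟨f ≫ e.hom, fun h0 => hf ?_⟩
      rw [← Category.comp_id f, ← e.hom_inv_id, ← Category.assoc, h0, zero_comp]
  | ext X₁ X₂ X₃ f g hseq h₁ h₃ ih₁ ih₃ =>
      intro hF hnz
      haveI := hseq.2.mono_f
      haveI := hseq.2.epi_g
      by_cases hz : IsZero X₁
      · haveI : Mono g := hseq.2.exact.mono_g (hz.eq_of_src f 0)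
        haveI : IsIso g := isIso_of_mono_of_epi g
        obtain ⟨u, hu⟩ := ih₃ (tfree_iso (asIso g) hF)
          (fun h0 => hnz (h0.of_iso (asIso g)))
        refine ⟨u ≫ inv g, fun h0 => hu ?_⟩
        rw [← Category.comp_id u, ← IsIso.inv_hom_id g, ← Category.assoc, h0, zero_comp]
      · obtain ⟨u, hu⟩ := ih₁ (tfree_of_mono f hF) hz
        exact ⟨u ≫ f, fun h0 => hu (zero_of_comp_mono f h0)⟩

lemma mono_of_nonzero {T : Set C} {A B : C}
    (hq : ∀ ⦃Y : C⦄ (p : A ⟶ Y), Epi p → ¬ IsIso p → Y ∈ T) (hB : B ∈ TFree T)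
    (f : A ⟶ B) (hf : f ≠ 0) : Mono f := by
  by_cases hiso : IsIso (Abelian.factorThruImage f)
  · rw [← Abelian.image.fac f]
    exact mono_comp _ _
  · have hIT : Abelian.image f ∈ T := hq (Abelian.factorThruImage f) inferInstance hiso
    have : Abelian.image.ι f = 0 := hB _ hIT (Abelian.image.ι f)
    exact absurd (by rw [← Abelian.image.fac f, this, comp_zero]) hf

lemma extClosure_quot {T : Set C} (hT : IsTorsionClass T) {M : C}
    (hqM : ∀ ⦃Y : C⦄ (p : M ⟶ Y), Epi p → ¬ IsIso p → Y ∈ T)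
    (X : C) (hX : ExtClosure (T ∪ {M}) X) :
    ∀ (Y : C) (p : X ⟶ Y), Epi p → ExtClosure (T ∪ {M}) Y := by
  induction hX with
  | of X h =>
      intro Y p hp
      rcases h with h | h
      · exact .of Y (Or.inl (hT.quot_closed p hp h))
      · rcases h with rfl
        by_cases hiso : IsIso p
        · exact .iso X Y (asIso p) (.of X (Or.inr rfl))
        · exact .of Y (Or.inl (hqM p hp hiso))
  | zero X h =>
      intro Y p hp
      exact .zero Y (@isZero_of_epi_of_isZero _ _ _ _ _ p hp h)
  | iso X X' e h ih =>
      intro Y p hp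
      exact ih Y (e.hom ≫ p) (@epi_comp _ _ _ _ _ _ inferInstance _ hp)
  | ext X₁ X₂ X₃ f g hseq h₁ h₃ ih₁ ih₃ =>
      intro Y p hp
      haveI := hseq.2.mono_f
      haveI := hseq.2.epi_g
      have key : (f ≫ p) ≫ cokernel.π (Abelian.image.ι (f ≫ p)) = 0 := by
        calc (f ≫ p) ≫ cokernel.π (Abelian.image.ι (f ≫ p))
            = Abelian.factorThruImage (f ≫ p)
              ≫ (Abelian.image.ι (f ≫ p) ≫ cokernel.π (Abelian.image.ι (f ≫ p))) := by
              rw [← Category.assoc, Abelian.image.fac]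
          _ = 0 := by rw [cokernel.condition, comp_zero]
      have hfc : f ≫ (p ≫ cokernel.π (Abelian.image.ι (f ≫ p))) = 0 := by
        rw [← Category.assoc]; exact key
      obtain ⟨d, hd⟩ := CokernelCofork.IsColimit.desc' hseq.2.gIsCokernel _ hfc
      have hd' : g ≫ d = p ≫ cokernel.π (Abelian.image.ι (f ≫ p)) := by simpa using hd
      haveI : Epi d := by
        have : Epi (g ≫ d) := by
          rw [hd']; exact @epi_comp _ _ _ _ _ _ hp _ inferInstance
        exact epi_of_epi g d
      exact .ext _ Y _ (Abelian.image.ι (f ≫ p)) (cokernel.π (Abelian.image.ι (f ≫ p)))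
        (isSES_of_mono _)
        (ih₁ _ (Abelian.factorThruImage (f ≫ p)) inferInstance)
        (ih₃ _ d inferInstance)

lemma extClosure_subset {S S' : Set C} (h : ∀ X ∈ S, ExtClosure S' X) :
    ∀ X : C, ExtClosure S X → ExtClosure S' X := by
  intro X hX
  induction hX with
  | of X hm => exact h X hm
  | zero X hz => exact .zero X hz
  | iso X Y e _ ih => exact .iso X Y e ih
  | ext X₁ X₂ X₃ f g hseq _ _ ih₁ ih₃ => exact .ext X₁ X₂ X₃ f g hseq ih₁ ih₃



end CoverUniqueAux

open CoverUniqueAux in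
/-- if `Filt(T ∪ {M})` covers `T` in the lattice of torsion classes,
then the only object `N ∈ Filt(T ∪ {M}) ∖ T` all of whose proper quotients lie in
`T` is `M` itself (up to isomorphism). -/
theorem cover_unique_extending_object
    {C : Type u} [Category.{v} C] [Abelian C]
    [∀ X : C, IsNoetherianObject X] [∀ X : C, IsArtinianObject X]
    (T : Set C) (hT : IsTorsionClass T) (M : C) (hM : IsIndec M) (hMT : M ∉ T)
    (hquotM : ∀ ⦃Y : C⦄ (p : M ⟶ Y), Epi p → ¬ IsIso p → Y ∈ T)
    (N : C) (hNmem : ExtClosure (T ∪ {M}) N) (hNT : N ∉ T)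
    (hquotN : ∀ ⦃Y : C⦄ (p : N ⟶ Y), Epi p → ¬ IsIso p → Y ∈ T)
    (hcov : CoversTC T {X : C | ExtClosure (T ∪ {M}) X}) :
    Nonempty (M ≅ N) := by
  
  have hMne : ¬ IsZero M := fun h => hMT (hT.zero_mem M h)
  have hNne : ¬ IsZero N := fun h => hNT (hT.zero_mem N h)
  have hMF : M ∈ TFree T := mem_tfree_of_proper_quot hT M hMT hquotM
  have hNF : N ∈ TFree T := mem_tfree_of_proper_quot hT N hNT hquotN
  have hTC : IsTorsionClass {X : C | ExtClosure (T ∪ {N}) X} :=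
    { zero_mem := fun X h => .zero X h
      iso_closed := fun X Y e h => .iso X Y e h
      ext_closed := fun X₁ X₂ X₃ f g hs h1 h3 => .ext X₁ X₂ X₃ f g hs h1 h3
      quot_closed := fun X Y p hp h => extClosure_quot hT hquotN X h Y p hp }
  have hsub : {X : C | ExtClosure (T ∪ {N}) X} ⊆ {X : C | ExtClosure (T ∪ {M}) X} := by
    intro X h
    refine extClosure_subset (fun Z hZ => ?_) X h
    rcases hZ with h1 | h1
    · exact .of Z (Or.inl h1)
    · rcases h1 with rfl
      exact hNmem
  have hTsub : T ⊆ {X : C | ExtClosure (T ∪ {N}) X} := fun Z hZ => .of Z (Or.inl hZ)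
  rcases hcov.2.2 _ hTC hTsub hsub with heq | heq
  · have hN' : N ∈ {X : C | ExtClosure (T ∪ {N}) X} := .of N (Or.inr rfl)
    rw [heq] at hN'
    exact absurd hN' hNT
  · have hMN : ExtClosure (T ∪ {N}) M := by
      have hM' : M ∈ {X : C | ExtClosure (T ∪ {M}) X} := .of M (Or.inr rfl)
      rw [← heq] at hM'
      exact hM'
    obtain ⟨f, hf⟩ := exists_nonzero_hom hT M N hNmem hNF hNne
    obtain ⟨g, hg⟩ := exists_nonzero_hom hT N M hMN hMF hMne
    haveI : Mono f := mono_of_nonzero hquotM hNF f hf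
    haveI : Mono g := mono_of_nonzero hquotN hMF g hg
    haveI : Mono (f ≫ g) := mono_comp f g
    haveI : Mono (g ≫ f) := mono_comp g f
    haveI : IsIso (f ≫ g) := isIso_of_mono_endo (f ≫ g)
    haveI : IsIso (g ≫ f) := isIso_of_mono_endo (g ≫ f)
    haveI : Epi f := by
      have hfac : (inv (g ≫ f) ≫ g) ≫ f = 𝟙 N := by rw [Category.assoc, IsIso.inv_hom_id]
      have : Epi ((inv (g ≫ f) ≫ g) ≫ f) := by rw [hfac]; infer_instance
      exact epi_of_epi (inv (g ≫ f) ≫ g) f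
    haveI : IsIso f := isIso_of_mono_of_epi f
    exact ⟨asIso f⟩
end

section
/- Let N₁, N₂, …, N_m be a complete forward hom-orthogonal sequence of bricks in an abelian length category A. Then every simple object of A is isomorphic to some N_i; moreover N₁ and N_m are simple. -/
open CategoryTheory CategoryTheory.Limits

universe v u

variable {C : Type u} [Category.{v} C] [Abelian C]

variable {P : Type*} [LinearOrder P]

/-- A complete forward hom-orthogonal sequence of bricks. -/
structure IsCFHO {C : Type u} [Category.{v} C] [Abelian C]
    (m : ℕ) (N : Fin m → C) : Prop where
  brick : ∀ i, IsBrick (N i)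
  forward_orth : ∀ i j : Fin m, i < j → ∀ f : N i ⟶ N j, f = 0
  maximal : ¬ ∃ (B : C) (k : ℕ), k ≤ m ∧ IsBrick B ∧
      (∀ i : Fin m, i.val < k → ∀ f : N i ⟶ B, f = 0) ∧
      (∀ j : Fin m, k ≤ j.val → ∀ f : B ⟶ N j, f = 0)
  generates : ∀ T : Set C, IsTorsionClass T → (∀ i, N i ∈ T) → ∀ X : C, X ∈ T

section Aux

open Opposite

lemma aux_isZero_of_epi_zero {X Y : C} (f : X ⟶ Y) [Epi f] (h : f = 0) : IsZero Y := by
  rw [IsZero.iff_id_eq_zero, ← cancel_epi f, h]; simp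

lemma aux_isZero_of_mono_zero {X Y : C} (f : X ⟶ Y) [Mono f] (h : f = 0) : IsZero X := by
  rw [IsZero.iff_id_eq_zero, ← cancel_mono f, h]; simp

lemma aux_epi_of_nonzero_to_simple {A S : C} [Simple S] {f : A ⟶ S} (h : f ≠ 0) : Epi f := by
  have hι : image.ι f ≠ 0 := fun hz => h (by rw [← image.fac f, hz, comp_zero])
  have : IsIso (image.ι f) := (Simple.mono_isIso_iff_nonzero _).mpr hι
  rw [← image.fac f]
  exact epi_comp _ _

lemma aux_mono_of_nonzero_from_simple {S B : C} [Simple S] {f : S ⟶ B} (h : f ≠ 0) : Mono f := by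
  apply Abelian.mono_of_kernel_ι_eq_zero
  by_contra hk
  have : IsIso (kernel.ι f) := (Simple.mono_isIso_iff_nonzero _).mpr hk
  exact h ((cancel_epi (kernel.ι f)).mp (by simp))

lemma aux_simple_unop {Z : Cᵒᵖ} (h : Simple Z) : Simple Z.unop := by
  apply simple_of_cosimple
  intro W f hf
  constructor
  · intro hi hz
    refine (Simple.not_isZero Z) ?_
    have hzz : IsZero Z.unop := by
      rw [IsZero.iff_id_eq_zero, ← cancel_mono f, hz]; simp
    exact hzz.op
  · intro hz
    have hop : f.op ≠ 0 := fun hzz => hz (by simpa using congrArg Quiver.Hom.unop hzz)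
    have : Mono f.op := inferInstance
    have : IsIso f.op := (Simple.mono_isIso_iff_nonzero (X := Z) f.op).mpr hop
    exact isIso_of_op f

lemma aux_exists_simple_quotient {X : C} [IsNoetherianObject X] (h : ¬IsZero X) :
    ∃ (S : C) (p : X ⟶ S), Epi p ∧ Simple S := by
  haveI : IsArtinianObject (op X) := by
    constructor
    refine ⟨?_⟩
    have hw := (inferInstance : WellFoundedGT (Subobject X)).wf
    let e := (Abelian.subobjectIsoSubobjectOp X).symm
    have hinv := InvImage.wf (fun a : Subobject (op X) => e (OrderDual.toDual a)) hw
    refine Subrelation.wf (r := InvImage (· > ·) fun a => e (OrderDual.toDual a)) ?_ hinv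
    intro a b hab
    exact e.lt_iff_lt.mpr (by exact hab)
  have hnz : ¬ IsZero (op X) := fun hz => h hz.unop
  obtain ⟨Y, hY⟩ := exists_simple_subobject hnz
  exact ⟨(Y : Cᵒᵖ).unop, Y.arrow.unop, inferInstance, aux_simple_unop hY⟩

end Aux

/-- a complete forward hom-orthogonal sequence contains all simple
objects up to isomorphism, and its first and last terms are simple. -/
theorem cfho_contains_all_simples
    {C : Type u} [Category.{v} C] [Abelian C]
    [∀ X : C, IsNoetherianObject X] [∀ X : C, IsArtinianObject X]
    (m : ℕ) (hm : 0 < m) (N : Fin m → C) (hN : IsCFHO m N) :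
    (∀ S : C, Simple S → ∃ i : Fin m, Nonempty (S ≅ N i)) ∧
    Simple (N ⟨0, hm⟩) ∧ Simple (N ⟨m - 1, Nat.sub_lt hm one_pos⟩) := by
  classical
  have key : ∀ S : C, Simple S → ∃ i : Fin m, Nonempty (S ≅ N i) := by
    intro S hS
    haveI := hS
    by_contra hno'
    have hno : ∀ i : Fin m, (S ≅ N i) → False := fun i e => hno' ⟨i, ⟨e⟩⟩
    have order : ∀ i j : Fin m, ∀ f : N i ⟶ S, f ≠ 0 → ∀ g : S ⟶ N j, g ≠ 0 → j < i := by
      intro i j f hf g hg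
      haveI : Epi f := aux_epi_of_nonzero_to_simple hf
      haveI : Mono g := aux_mono_of_nonzero_from_simple hg
      have hfg : f ≫ g ≠ 0 := by
        intro hz
        exact hg ((cancel_epi f).mp (by rw [hz, comp_zero]))
      by_contra hle
      push_neg at hle
      rcases lt_or_eq_of_le hle with hlt | heq
      · exact hfg (hN.forward_orth i j hlt (f ≫ g))
      · cases heq
        rcases (hN.brick i).2 (f ≫ g) with h0 | hiso
        · exact hfg h0
        · haveI := hiso
          haveI : Mono (f ≫ g) := inferInstance
          haveI : Mono f := mono_of_mono f g
          haveI : IsIso f := isIso_of_mono_of_epi f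
          exact hno i (asIso f).symm
    apply hN.maximal
    have brickS : IsBrick S :=
      ⟨Simple.not_isZero S, fun f => or_iff_not_imp_left.mpr fun hf => isIso_of_hom_simple hf⟩
    by_cases hex : ∃ n : ℕ, ∃ hn : n < m, ∃ f : N ⟨n, hn⟩ ⟶ S, f ≠ 0
    · obtain ⟨hk, f0, hf0⟩ := Nat.find_spec hex
      refine ⟨S, Nat.find hex, le_of_lt hk, brickS, ?_, ?_⟩
      · intro i hi f
        by_contra hf
        exact Nat.find_min hex hi ⟨i.isLt, f, hf⟩
      · intro j hj g
        by_contra hg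
        have := order ⟨Nat.find hex, hk⟩ j f0 hf0 g hg
        exact absurd (lt_of_lt_of_le this hj) (lt_irrefl _)
    · refine ⟨S, m, le_refl m, brickS, ?_, ?_⟩
      · intro i _ f
        by_contra hf
        exact hex ⟨i.val, i.isLt, f, hf⟩
      · intro j hj g
        exact absurd (lt_of_lt_of_le j.isLt hj) (lt_irrefl _)
  refine ⟨key, ?_, ?_⟩
  · set i0 : Fin m := ⟨0, hm⟩ with hi0
    obtain ⟨S, p, hp, hSs⟩ := aux_exists_simple_quotient (hN.brick i0).1
    haveI := hSs; haveI := hp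
    obtain ⟨i, ⟨e⟩⟩ := key S hSs
    haveI : Epi (p ≫ e.hom) := epi_comp _ _
    have hgnz : p ≫ e.hom ≠ 0 := fun hz => (hN.brick i).1 (aux_isZero_of_epi_zero _ hz)
    have hle0 : i0 ≤ i := by rw [Fin.le_def]; exact Nat.zero_le _
    rcases eq_or_lt_of_le hle0 with hi | hi
    · cases hi
      rcases (hN.brick i0).2 (p ≫ e.hom) with h0 | hiso
      · exact absurd h0 hgnz
      · haveI := hiso
        have hp' : IsIso p := by
          have : p = (p ≫ e.hom) ≫ e.inv := by simp
          rw [this]; infer_instance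
        exact Simple.of_iso (asIso p)
    · exact absurd (hN.forward_orth i0 i hi (p ≫ e.hom)) hgnz
  · set i1 : Fin m := ⟨m - 1, Nat.sub_lt hm one_pos⟩ with hi1
    obtain ⟨Y, hY⟩ := exists_simple_subobject (hN.brick i1).1
    haveI := hY
    obtain ⟨i, ⟨e⟩⟩ := key (Y : C) hY
    haveI : Mono (e.inv ≫ Y.arrow) := mono_comp _ _
    have hgnz : e.inv ≫ Y.arrow ≠ 0 := fun hz => (hN.brick i).1 (aux_isZero_of_mono_zero _ hz)
    have hle : i ≤ i1 := by
      rw [Fin.le_def]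
      exact Nat.le_sub_one_of_lt i.isLt
    rcases lt_or_eq_of_le hle with hi | hi
    · exact absurd (hN.forward_orth i i1 hi (e.inv ≫ Y.arrow)) hgnz
    · rw [hi] at e
      haveI : Mono (e.inv ≫ Y.arrow) := mono_comp _ _
      have hgnz' : e.inv ≫ Y.arrow ≠ 0 := fun hz => (hN.brick i1).1 (aux_isZero_of_mono_zero _ hz)
      rcases (hN.brick i1).2 (e.inv ≫ Y.arrow) with h0 | hiso
      · exact absurd h0 hgnz'
      · haveI := hiso
        have ha : IsIso Y.arrow := by
          have : Y.arrow = e.hom ≫ (e.inv ≫ Y.arrow) := by simp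
          rw [this]; infer_instance
        exact Simple.of_iso (asIso Y.arrow).symm
end

section
/- If an abelian length category A admits a maximal green sequence (a finite chain of torsion classes 0 = T₀ ⋖ T₁ ⋖ ⋯ ⋖ T_m = A where each step is a cover in the lattice of torsion classes), then A has only finitely many simple objects up to isomorphism. -/
open CategoryTheory CategoryTheory.Limits

universe v u

variable {C : Type u} [Category.{v} C] [Abelian C]

variable {P : Type*} [LinearOrder P]

/-- A maximal green sequence of torsion classes. -/
structure IsMGS {C : Type u} [Category.{v} C] [Abelian C]
    (m : ℕ) (T : Fin (m + 1) → Set C) : Prop where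
  tors : ∀ i, IsTorsionClass (T i)
  bot : ∀ X ∈ T 0, IsZero X
  top : ∀ X : C, X ∈ T (Fin.last m)
  cover : ∀ i : Fin m, CoversTC (T i.castSucc) (T i.succ)


section AuxMGS

open ZeroObject

variable {C : Type u} [Category.{v} C] [Abelian C]

lemma aux_isZero_of_epi_of_eq_zero {X Y : C} (p : X ⟶ Y) (hp : Epi p) (h : p = 0) :
    IsZero Y := by
  haveI := hp
  rw [IsZero.iff_id_eq_zero]
  exact (cancel_epi p).1 (by simp [h])

lemma aux_isSES_cokernel {X Y : C} (ι : X ⟶ Y) [Mono ι] : IsSES ι (cokernel.π ι) :=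
  ⟨cokernel.condition ι,
    { exact := ShortComplex.exact_of_g_is_cokernel _ (cokernelIsCokernel ι) }⟩

lemma aux_extClosure_quot {T : Set C} (hT : IsTorsionClass T) {X₀ : C} (hX₀ : Simple X₀)
    {X : C} (h : ExtClosure (T ∪ {X₀}) X) :
    ∀ ⦃Y : C⦄ (p : X ⟶ Y), Epi p → ExtClosure (T ∪ {X₀}) Y := by
  induction h with
  | of X hX =>
    intro Y p hp
    rcases hX with hX | hX
    · exact .of Y (Or.inl (hT.quot_closed p hp hX))
    · rcases Set.mem_singleton_iff.1 hX with rfl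
      haveI := hX₀; haveI := hp
      by_cases hz : p = 0
      · exact .zero Y (aux_isZero_of_epi_of_eq_zero p hp hz)
      · haveI : IsIso p := isIso_of_epi_of_nonzero hz
        exact .iso _ Y (asIso p) (.of _ (Or.inr rfl))
  | zero X hX =>
    intro Y p hp
    exact .zero Y (aux_isZero_of_epi_of_eq_zero p hp (hX.eq_of_src p 0))
  | iso X X' e hX ih =>
    intro Y p hp
    haveI := hp
    exact ih (e.hom ≫ p) inferInstance
  | ext X₁ X₂ X₃ f g hseq h₁ h₃ ih₁ ih₃ =>
    intro Y p hp
    obtain ⟨w, hse⟩ := hseq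
    haveI := hse.mono_f
    haveI := hse.epi_g
    haveI := hp
    have hfac : factorThruImage (f ≫ p) ≫ image.ι (f ≫ p) = f ≫ p := image.fac _
    have hzero : f ≫ p ≫ cokernel.π (image.ι (f ≫ p)) = 0 := by
      calc f ≫ p ≫ cokernel.π (image.ι (f ≫ p))
          = (factorThruImage (f ≫ p) ≫ image.ι (f ≫ p)) ≫ cokernel.π (image.ι (f ≫ p)) := by
            rw [hfac, Category.assoc]
        _ = 0 := by rw [Category.assoc, cokernel.condition, comp_zero]
    obtain ⟨r, hr⟩ := hse.exact.desc' (p ≫ cokernel.π (image.ι (f ≫ p))) hzero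
    haveI : Epi (g ≫ r) := by rw [hr]; infer_instance
    have hre : Epi r := epi_of_epi g r
    exact .ext _ Y _ (image.ι (f ≫ p)) (cokernel.π (image.ι (f ≫ p)))
      (aux_isSES_cokernel _) (ih₁ (factorThruImage (f ≫ p)) inferInstance) (ih₃ r hre)

lemma aux_extClosure_isTorsionClass {T : Set C} (hT : IsTorsionClass T)
    {X₀ : C} (hX₀ : Simple X₀) :
    IsTorsionClass {X : C | ExtClosure (T ∪ {X₀}) X} where
  zero_mem X h := ExtClosure.zero X h
  iso_closed X Y e h := ExtClosure.iso X Y e h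
  ext_closed X₁ X₂ X₃ f g hseq h₁ h₃ := ExtClosure.ext X₁ X₂ X₃ f g hseq h₁ h₃
  quot_closed X Y p hp h := aux_extClosure_quot hT hX₀ h p hp

lemma aux_extClosure_subset {W S : Set C} (hS : IsTorsionClass S) (hWS : W ⊆ S)
    {X : C} (h : ExtClosure W X) : X ∈ S := by
  induction h with
  | of X hX => exact hWS hX
  | zero X hX => exact hS.zero_mem X hX
  | iso X Y e hX ih => exact hS.iso_closed e ih
  | ext X₁ X₂ X₃ f g hseq h₁ h₃ ih₁ ih₃ => exact hS.ext_closed f g hseq ih₁ ih₃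

lemma aux_simple_extClosure {W : Set C} {X : C} (h : ExtClosure W X) :
    Simple X → ∃ Y ∈ W, Nonempty (X ≅ Y) := by
  induction h with
  | of X hX => exact fun _ => ⟨X, hX, ⟨Iso.refl X⟩⟩
  | zero X hX =>
    intro hs
    haveI := hs
    exact absurd hX (Simple.not_isZero X)
  | iso X Y e hX ih =>
    intro hs
    haveI := hs
    haveI : Simple X := Simple.of_iso e
    obtain ⟨Z, hZ, ⟨j⟩⟩ := ih this
    exact ⟨Z, hZ, ⟨e.symm ≪≫ j⟩⟩
  | ext X₁ X₂ X₃ f g hseq h₁ h₃ ih₁ ih₃ =>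
    intro hs
    haveI := hs
    obtain ⟨w, hse⟩ := hseq
    haveI := hse.mono_f
    haveI := hse.epi_g
    by_cases hf : f = 0
    · haveI : Mono g := hse.exact.mono_g hf
      haveI : IsIso g := isIso_of_mono_of_epi g
      haveI : Simple X₃ := Simple.of_iso (asIso g).symm
      obtain ⟨Z, hZ, ⟨j⟩⟩ := ih₃ this
      exact ⟨Z, hZ, ⟨asIso g ≪≫ j⟩⟩
    · haveI : IsIso f := isIso_of_mono_of_nonzero hf
      haveI : Simple X₁ := Simple.of_iso (asIso f)
      obtain ⟨Z, hZ, ⟨j⟩⟩ := ih₁ this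
      exact ⟨Z, hZ, ⟨(asIso f).symm ≪≫ j⟩⟩

lemma aux_step_eq {m : ℕ} {T : Fin (m + 1) → Set C} (hT : IsMGS m T) (j : Fin m)
    {X₀ : C} (hs : Simple X₀) (h1 : X₀ ∈ T j.succ) (h0 : X₀ ∉ T j.castSucc) :
    T j.succ = {X : C | ExtClosure (T j.castSucc ∪ {X₀}) X} := by
  have hW : T j.castSucc ∪ {X₀} ⊆ T j.succ := by
    rintro X (hX | hX)
    · exact (hT.cover j).1 hX
    · rcases Set.mem_singleton_iff.1 hX with rfl; exact h1
  have hsub : {X : C | ExtClosure (T j.castSucc ∪ {X₀}) X} ⊆ T j.succ :=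
    fun X hX => aux_extClosure_subset (hT.tors j.succ) hW hX
  have hsup : T j.castSucc ⊆ {X : C | ExtClosure (T j.castSucc ∪ {X₀}) X} :=
    fun X hX => ExtClosure.of X (Or.inl hX)
  rcases (hT.cover j).2.2 _ (aux_extClosure_isTorsionClass (hT.tors j.castSucc) hs)
      hsup hsub with hE | hE
  · exact absurd (hE ▸ ExtClosure.of X₀ (Or.inr rfl)) h0
  · exact hE.symm

end AuxMGS

/-- if an abelian length category admits a maximal green sequence,
then it has only finitely many simple objects up to isomorphism. -/
theorem finitely_many_simples_of_mgs
    {C : Type u} [Category.{v} C] [Abelian C]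
    [∀ X : C, IsNoetherianObject X] [∀ X : C, IsArtinianObject X]
    (m : ℕ) (T : Fin (m + 1) → Set C) (hT : IsMGS m T) :
    ∃ (k : ℕ) (S : Fin k → C), ∀ X : C, Simple X → ∃ i, Nonempty (X ≅ S i) := by
    classical
  obtain ⟨Z₀, -⟩ := (HasZeroObject.zero (C := C) : ∃ X : C, IsZero X)
  let rep : Fin m → C := fun j =>
    if h : ∃ X : C, Simple X ∧ X ∈ T j.succ ∧ X ∉ T j.castSucc then h.choose else Z₀
  refine ⟨m, rep, ?_⟩
  intro X hX
  haveI := hX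
  have hlast : ∃ n : ℕ, ∃ h : n < m + 1, X ∈ T ⟨n, h⟩ :=
    ⟨m, Nat.lt_succ_self m, by simpa [Fin.last] using hT.top X⟩
  obtain ⟨hn, hmem⟩ := Nat.find_spec hlast
  set n := Nat.find hlast with hn_def
  have hn0 : n ≠ 0 := by
    intro h0
    have hz : (⟨n, hn⟩ : Fin (m + 1)) = 0 := by
      apply Fin.ext; simp [h0]
    exact Simple.not_isZero X (hT.bot X (hz ▸ hmem))
  obtain ⟨k, hk⟩ : ∃ k, n = k + 1 :=
    ⟨n - 1, (Nat.succ_pred_eq_of_pos (Nat.pos_of_ne_zero hn0)).symm⟩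
  have hkm : k < m := by omega
  set j : Fin m := ⟨k, hkm⟩ with hj
  have hsucc : j.succ = (⟨n, hn⟩ : Fin (m + 1)) := by
    apply Fin.ext; simp [hj, hk]
  have hcast : j.castSucc = (⟨k, by omega⟩ : Fin (m + 1)) := by
    apply Fin.ext; simp [hj]
  have h1 : X ∈ T j.succ := by rw [hsucc]; exact hmem
  have h0 : X ∉ T j.castSucc := by
    intro hc
    rw [hcast] at hc
    have : n ≤ k := Nat.find_le ⟨by omega, hc⟩
    omega
  have hwit : ∃ Z : C, Simple Z ∧ Z ∈ T j.succ ∧ Z ∉ T j.castSucc := ⟨X, hX, h1, h0⟩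
  have hrep : rep j = hwit.choose := by simp only [rep, dif_pos hwit]
  obtain ⟨hZs, hZ1, hZ0⟩ := hwit.choose_spec
  have heq := aux_step_eq hT j hZs hZ1 hZ0
  have hXE : ExtClosure (T j.castSucc ∪ {hwit.choose}) X := by
    have hx := h1; rwa [heq] at hx
  obtain ⟨Y, hY, ⟨e⟩⟩ := aux_simple_extClosure hXE hX
  rcases hY with hY | hY
  · exact absurd ((hT.tors j.castSucc).iso_closed e.symm hY) h0
  · rcases Set.mem_singleton_iff.1 hY with rfl
    exact ⟨j, ⟨e ≪≫ eqToIso hrep.symm⟩⟩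
end

section
/- Let 0 = T₀ ⋖ T₁ ⋖ ⋯ ⋖ T_m = A be a maximal green sequence in an abelian length category, with N_i the minimal extending object realizing T_i = Filt(T_{i-1} ∪ {N_i}). Then Filt(N_i) = T_i ∩ F_{i-1}, where F_{i-1} is the torsion-free class corresponding to T_{i-1}. -/
open CategoryTheory CategoryTheory.Limits

universe v u

variable {C : Type u} [Category.{v} C] [Abelian C]

variable {P : Type*} [LinearOrder P]

/-! ### Auxiliary machinery for Statement 9 -/

namespace MGS9

open ZeroObject CategoryTheory.Abelian

attribute [local instance] CategoryTheory.Abelian.Pseudoelement.objectToSort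
  CategoryTheory.Abelian.Pseudoelement.homToFun

theorem ses_mono {X Y Z : C} {f : X ⟶ Y} {g : Y ⟶ Z} (h : IsSES f g) : Mono f :=
  h.choose_spec.mono_f

theorem ses_epi {X Y Z : C} {f : X ⟶ Y} {g : Y ⟶ Z} (h : IsSES f g) : Epi g :=
  h.choose_spec.epi_g

/-- A mono together with its cokernel projection forms a short exact sequence. -/
theorem isSES_of_mono {W X : C} (a : W ⟶ X) [Mono a] : IsSES a (cokernel.π a) := by
  refine ⟨cokernel.condition a, ShortComplex.ShortExact.mk' ?_ ‹Mono a› inferInstance⟩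
  exact ShortComplex.exact_of_g_is_cokernel _ (cokernelIsCokernel a)

theorem isSES_id_zero (X : C) : IsSES (𝟙 X) (0 : X ⟶ (0 : C)) := by
  haveI : Epi (0 : X ⟶ (0 : C)) := ⟨fun g h _ => (isZero_zero C).eq_of_src g h⟩
  refine ⟨by simp, ShortComplex.ShortExact.mk' ?_ inferInstance ‹_›⟩
  exact (ShortComplex.exact_iff_epi _ rfl).2 inferInstance

theorem isSES_zero_id (X : C) : IsSES (0 : (0 : C) ⟶ X) (𝟙 X) := by
  haveI : Mono (0 : (0 : C) ⟶ X) := ⟨fun g h _ => (isZero_zero C).eq_of_tgt g h⟩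
  refine ⟨by simp, ShortComplex.ShortExact.mk' ?_ ‹_› inferInstance⟩
  exact (ShortComplex.exact_iff_mono _ rfl).2 inferInstance

/-- Transport of short exact sequences along isomorphisms. -/
theorem ses_of_iso {X₁ X₂ X₃ Y₁ Y₂ Y₃ : C} {f : X₁ ⟶ X₂} {g : X₂ ⟶ X₃}
    (h : IsSES f g) (e₁ : X₁ ≅ Y₁) (e₂ : X₂ ≅ Y₂) (e₃ : X₃ ≅ Y₃)
    {f' : Y₁ ⟶ Y₂} {g' : Y₂ ⟶ Y₃}
    (c₁ : e₁.hom ≫ f' = f ≫ e₂.hom) (c₂ : e₂.hom ≫ g' = g ≫ e₃.hom) :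
    IsSES f' g' := by
  obtain ⟨w, hse⟩ := h
  have hf' : f' = e₁.inv ≫ f ≫ e₂.hom := by
    rw [← c₁, ← Category.assoc, e₁.inv_hom_id, Category.id_comp]
  have hg' : g' = e₂.inv ≫ g ≫ e₃.hom := by
    rw [← c₂, ← Category.assoc, e₂.inv_hom_id, Category.id_comp]
  have w' : f' ≫ g' = 0 := by
    rw [hf', hg']
    simp [reassoc_of% w]
  exact ⟨w', ShortComplex.shortExact_of_iso
    (ShortComplex.isoMk e₁ e₂ e₃ c₁ c₂ :
      ShortComplex.mk f g w ≅ ShortComplex.mk f' g' w') hse⟩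

/-- If a short exact sequence admits a retraction of its mono, then the middle term
also fits in a short exact sequence the other way round. -/
theorem ses_retraction {Nn P W : C} {a : Nn ⟶ P} {b : P ⟶ W} (h : IsSES a b)
    {r : P ⟶ Nn} (hr : a ≫ r = 𝟙 Nn) : ∃ s : W ⟶ P, IsSES s r := by
  obtain ⟨wab, h'⟩ := h
  haveI : Mono a := h'.mono_f
  haveI : Epi b := h'.epi_g
  have hk : a ≫ (𝟙 P - r ≫ a) = 0 := by
    rw [Preadditive.comp_sub, Category.comp_id, ← Category.assoc, hr, Category.id_comp, sub_self]
  let s : W ⟶ P := h'.exact.desc (𝟙 P - r ≫ a) hk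
  have hbs : b ≫ s = 𝟙 P - r ≫ a := h'.exact.g_desc _ _
  have hsr : s ≫ r = 0 := by
    have h2 : b ≫ (s ≫ r) = b ≫ 0 := by
      rw [comp_zero, ← Category.assoc, hbs, Preadditive.sub_comp, Category.id_comp, Category.assoc, hr,
        Category.comp_id, sub_self]
    exact (cancel_epi b).1 h2
  have hsb : s ≫ b = 𝟙 W := by
    have h2 : b ≫ (s ≫ b) = b ≫ 𝟙 W := by
      rw [Category.comp_id, ← Category.assoc, hbs, Preadditive.sub_comp, Category.id_comp, Category.assoc,
        wab, comp_zero, sub_zero]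
    exact (cancel_epi b).1 h2
  refine ⟨s, hsr, ShortComplex.Splitting.shortExact
    (S := ShortComplex.mk s r hsr) ⟨b, a, hsb, hr, by rw [hbs]; abel⟩⟩

/-- Given a SES `A ↪ B ↠ Co` and a SES `W ↪ A ↠ Q`, the quotient `B/W` sits in a
SES `Q ↪ B/W ↠ Co`. -/
theorem quot_ses {A B Co W Q : C} {f : A ⟶ B} {g : B ⟶ Co} (hfg : IsSES f g)
    {w : W ⟶ A} {q : A ⟶ Q} (hwq : IsSES w q) :
    ∃ (d₁ : Q ⟶ cokernel (w ≫ f)) (d₂ : cokernel (w ≫ f) ⟶ Co), IsSES d₁ d₂ := by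
  obtain ⟨wfg, hfg'⟩ := hfg
  obtain ⟨wwq, hwq'⟩ := hwq
  haveI : Mono f := hfg'.mono_f
  haveI : Epi g := hfg'.epi_g
  haveI : Mono w := hwq'.mono_f
  haveI : Epi q := hwq'.epi_g
  haveI : Mono (w ≫ f) := mono_comp w f
  obtain ⟨wπ, hπ⟩ := isSES_of_mono (w ≫ f)
  let d₁ : Q ⟶ cokernel (w ≫ f) :=
    hwq'.exact.desc (f ≫ cokernel.π (w ≫ f)) (by rw [← Category.assoc, cokernel.condition])
  have hd₁ : q ≫ d₁ = f ≫ cokernel.π (w ≫ f) := hwq'.exact.g_desc _ _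
  let d₂ : cokernel (w ≫ f) ⟶ Co :=
    cokernel.desc (w ≫ f) g (by rw [Category.assoc, wfg, comp_zero])
  have hd₂ : cokernel.π (w ≫ f) ≫ d₂ = g := cokernel.π_desc _ _ _
  have hcond : d₁ ≫ d₂ = 0 := by
    have h2 : q ≫ (d₁ ≫ d₂) = q ≫ 0 := by
      rw [comp_zero, ← Category.assoc, hd₁, Category.assoc, hd₂, wfg]
    exact (cancel_epi q).1 h2
  have hmono : Mono d₁ := by
    apply Pseudoelement.mono_of_zero_of_map_zero
    intro x hx
    obtain ⟨a, ha⟩ := Pseudoelement.pseudo_surjective_of_epi q x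
    have h1 : cokernel.π (w ≫ f) (f a) = 0 := by
      rw [← Pseudoelement.comp_apply, ← hd₁, Pseudoelement.comp_apply, ha]
      exact hx
    obtain ⟨c, hc⟩ := Pseudoelement.pseudo_exact_of_exact hπ.exact (f a) h1
    have h3 : w c = a := by
      apply Pseudoelement.pseudo_injective_of_mono f
      rw [← Pseudoelement.comp_apply]
      exact hc
    rw [← ha, ← h3, ← Pseudoelement.comp_apply, wwq]
    exact Pseudoelement.zero_apply _ _
  have hepi : Epi d₂ := by
    haveI : Epi (cokernel.π (w ≫ f) ≫ d₂) := by rw [hd₂]; infer_instance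
    exact epi_of_epi (cokernel.π (w ≫ f)) d₂
  haveI := hepi
  have hexact : (ShortComplex.mk d₁ d₂ hcond).Exact := by
    apply ShortComplex.exact_of_g_is_cokernel
    refine CokernelCofork.IsColimit.ofπ' (f := d₁) d₂ hcond (fun {Z'} t ht => ?_)
    have harg : f ≫ cokernel.π (w ≫ f) ≫ t = 0 := by
      rw [← Category.assoc, ← hd₁, Category.assoc, ht, comp_zero]
    refine ⟨hfg'.exact.desc (cokernel.π (w ≫ f) ≫ t) harg, ?_⟩
    have h2 : cokernel.π (w ≫ f) ≫ (d₂ ≫ hfg'.exact.desc (cokernel.π (w ≫ f) ≫ t) harg)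
        = cokernel.π (w ≫ f) ≫ t := by
      rw [← Category.assoc, hd₂, hfg'.exact.g_desc]
    exact (cancel_epi (cokernel.π (w ≫ f))).1 h2
  exact ⟨d₁, d₂, hcond, ShortComplex.ShortExact.mk' hexact hmono hepi⟩

/-- Pulling back a subobject of the quotient along a short exact sequence. -/
theorem pullback_ses {A B Co W U : C} {f : A ⟶ B} {g : B ⟶ Co} (hfg : IsSES f g)
    {w : W ⟶ Co} {u : Co ⟶ U} (hwu : IsSES w u) :
    (∃ l : A ⟶ pullback g w, IsSES l (pullback.snd g w)) ∧
      IsSES (pullback.fst g w) (g ≫ u) := by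
  obtain ⟨wfg, hfg'⟩ := hfg
  obtain ⟨wwu, hwu'⟩ := hwu
  haveI : Mono f := hfg'.mono_f
  haveI : Epi g := hfg'.epi_g
  haveI : Mono w := hwu'.mono_f
  haveI : Epi u := hwu'.epi_g
  have hcomm : pullback.fst g w ≫ g = pullback.snd g w ≫ w := pullback.condition
  constructor
  · have h0 : f ≫ g = (0 : A ⟶ W) ≫ w := by rw [wfg, zero_comp]
    let l := pullback.lift f 0 h0
    have hlf : l ≫ pullback.fst g w = f := pullback.lift_fst _ _ _
    have hls : l ≫ pullback.snd g w = 0 := pullback.lift_snd _ _ _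
    haveI : Mono l := by
      haveI : Mono (l ≫ pullback.fst g w) := by rw [hlf]; infer_instance
      exact mono_of_mono l (pullback.fst g w)
    refine ⟨l, hls, ShortComplex.ShortExact.mk' ?_ ‹Mono l› inferInstance⟩
    apply ShortComplex.exact_of_f_is_kernel
    refine KernelFork.IsLimit.ofι' l hls (fun {Z} t ht => ?_)
    refine ⟨hfg'.exact.lift (t ≫ pullback.fst g w) ?_, ?_⟩
    · rw [Category.assoc, hcomm, ← Category.assoc, ht, zero_comp]
    · apply pullback.hom_ext
      · rw [Category.assoc, hlf, hfg'.exact.lift_f]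
      · rw [Category.assoc, hls, comp_zero, ht]
  · have hcond2 : pullback.fst g w ≫ g ≫ u = 0 := by
      rw [← Category.assoc, hcomm, Category.assoc, wwu, comp_zero]
    haveI : Epi (g ≫ u) := epi_comp g u
    refine ⟨hcond2, ShortComplex.ShortExact.mk' ?_ inferInstance inferInstance⟩
    apply ShortComplex.exact_of_f_is_kernel
    refine KernelFork.IsLimit.ofι' (pullback.fst g w) hcond2 (fun {Z} t ht => ?_)
    have htg : (t ≫ g) ≫ u = 0 := by rw [Category.assoc]; exact ht
    exact ⟨pullback.lift t (hwu'.exact.lift (t ≫ g) htg) (hwu'.exact.lift_f _ _).symm,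
      pullback.lift_fst _ _ _⟩

/-- `Dec Tc Nb X` means that `X` is an extension of an `ExtClosure {Nb}`-object by a
torsion subobject from `Tc`. -/
def Dec (Tc : Set C) (Nb : C) (X : C) : Prop :=
  ∃ (W X' : C) (a : W ⟶ X) (b : X ⟶ X'),
    IsSES a b ∧ W ∈ Tc ∧ ExtClosure {Nb} X'

theorem dec_of_mem (Tc : Set C) (Nb : C) {X : C} (hX : X ∈ Tc) : Dec Tc Nb X :=
  ⟨X, 0, 𝟙 X, 0, isSES_id_zero X, hX, ExtClosure.zero _ (isZero_zero C)⟩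

theorem dec_of_filt (Tc : Set C) (hTc : IsTorsionClass Tc) (Nb : C) {X : C}
    (hX : ExtClosure {Nb} X) : Dec Tc Nb X :=
  ⟨0, X, 0, 𝟙 X, isSES_zero_id X, hTc.zero_mem _ (isZero_zero C), hX⟩

/-- Key lemma: an extension of a `Tc`-object by a `Filt Nb`-object decomposes with the
torsion part at the bottom. -/
theorem decStar (Tc : Set C) (hTc : IsTorsionClass Tc) (Nb : C)
    (hME : IsMinimalExtending Tc Nb) {Q : C} (hQ : ExtClosure {Nb} Q) :
    ∀ ⦃P W : C⦄ (a : Q ⟶ P) (b : P ⟶ W), IsSES a b → W ∈ Tc → Dec Tc Nb P := by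
  induction hQ with
  | of X h =>
    rw [Set.mem_singleton_iff] at h
    subst h
    intro P W a b hab hW
    by_cases hr : ∃ r : P ⟶ X, a ≫ r = 𝟙 X
    · obtain ⟨r, hrr⟩ := hr
      obtain ⟨s, hs⟩ := ses_retraction hab hrr
      exact ⟨W, X, s, r, hs, hW, ExtClosure.of X rfl⟩
    · exact dec_of_mem Tc X (hME.ext_mem a b hab hW hr)
  | zero X h =>
    intro P W a b hab hW
    obtain ⟨wab, hse⟩ := hab
    have ha : a = 0 := h.eq_of_src a 0
    haveI : Mono b := hse.exact.mono_g ha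
    haveI : Epi b := hse.epi_g
    haveI : IsIso b := isIso_of_mono_of_epi b
    exact dec_of_mem Tc Nb (hTc.iso_closed (asIso b).symm hW)
  | iso X Y e hX ih =>
    intro P W a b hab hW
    exact ih (e.hom ≫ a) b
      (ses_of_iso hab e.symm (Iso.refl P) (Iso.refl W) (by simp) (by simp)) hW
  | ext X₁ X₂ X₃ f g hseq h₁ h₃ ih₁ ih₃ =>
    intro P W a b hab hW
    haveI : Mono f := ses_mono hseq
    haveI : Mono a := ses_mono hab
    haveI : Mono (f ≫ a) := mono_comp f a
    obtain ⟨d₁, d₂, hd⟩ := quot_ses hab hseq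
    obtain ⟨W', K', a', b', hS', hW', hK'⟩ := ih₃ d₁ d₂ hd hW
    obtain ⟨⟨l, hl⟩, h2⟩ := pullback_ses (isSES_of_mono (f ≫ a)) hS'
    obtain ⟨W'', V', a'', b'', hS'', hW'', hV'⟩ := ih₁ l (pullback.snd _ _) hl hW'
    haveI : Mono a'' := ses_mono hS''
    haveI : Mono (pullback.fst (cokernel.π (f ≫ a)) a') := ses_mono h2
    haveI : Mono (a'' ≫ pullback.fst (cokernel.π (f ≫ a)) a') := mono_comp _ _
    obtain ⟨e₁, e₂, he⟩ := quot_ses h2 hS''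
    exact ⟨W'', cokernel (a'' ≫ pullback.fst (cokernel.π (f ≫ a)) a'),
      a'' ≫ pullback.fst _ _, cokernel.π _, isSES_of_mono _, hW'',
      ExtClosure.ext V' _ K' e₁ e₂ he hV' hK'⟩

/-- Every object of the extension closure of `Tc ∪ {Nb}` decomposes. -/
theorem dec_of_mem_closure (Tc : Set C) (hTc : IsTorsionClass Tc) (Nb : C)
    (hME : IsMinimalExtending Tc Nb) {X : C} (hX : ExtClosure (Tc ∪ {Nb}) X) :
    Dec Tc Nb X := by
  induction hX with
  | of X h =>
    rcases h with h | h
    · exact dec_of_mem Tc Nb h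
    · exact dec_of_filt Tc hTc Nb (ExtClosure.of X h)
  | zero X h => exact dec_of_mem Tc Nb (hTc.zero_mem X h)
  | iso X Y e hX ih =>
    obtain ⟨W, X', a, b, hab, hW, hX'⟩ := ih
    exact ⟨W, X', a ≫ e.hom, e.inv ≫ b,
      ses_of_iso hab (Iso.refl W) e (Iso.refl X') (by simp) (by simp), hW, hX'⟩
  | ext X₁ X₂ X₃ f g hseq h₁ h₃ ih₁ ih₃ =>
    obtain ⟨W₁, Q₁, a₁, b₁, h1, hW₁, hQ₁⟩ := ih₁
    obtain ⟨W₃, Q₃, a₃, b₃, h3, hW₃, hQ₃⟩ := ih₃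
    haveI : Mono a₁ := ses_mono h1
    haveI : Mono f := ses_mono hseq
    haveI : Mono (a₁ ≫ f) := mono_comp _ _
    obtain ⟨d₁, d₂, hd⟩ := quot_ses hseq h1
    obtain ⟨⟨l, hl⟩, h2⟩ := pullback_ses hd h3
    obtain ⟨W', V', a', b', hS', hW', hV'⟩ :=
      decStar Tc hTc Nb hME hQ₁ l (pullback.snd _ _) hl hW₃
    haveI : Mono a' := ses_mono hS'
    haveI : Mono (pullback.fst d₂ a₃) := ses_mono h2
    haveI : Mono (a' ≫ pullback.fst d₂ a₃) := mono_comp _ _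
    obtain ⟨e₁, e₂, he⟩ := quot_ses h2 hS'
    have hR : ExtClosure {Nb} (cokernel (a' ≫ pullback.fst d₂ a₃)) :=
      ExtClosure.ext V' _ Q₃ e₁ e₂ he hV' hQ₃
    obtain ⟨⟨l₂, hl₂⟩, h4⟩ := pullback_ses (isSES_of_mono (a₁ ≫ f))
      (isSES_of_mono (a' ≫ pullback.fst d₂ a₃))
    exact ⟨pullback (cokernel.π (a₁ ≫ f)) (a' ≫ pullback.fst d₂ a₃),
      cokernel (a' ≫ pullback.fst d₂ a₃), pullback.fst _ _,
      cokernel.π (a₁ ≫ f) ≫ cokernel.π (a' ≫ pullback.fst d₂ a₃), h4,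
      hTc.ext_closed l₂ (pullback.snd _ _) hl₂ hW₁ hW', hR⟩

theorem extClosure_mono {S S' : Set C} (h : S ⊆ S') {X : C}
    (hX : ExtClosure S X) : ExtClosure S' X := by
  induction hX with
  | of X hx => exact ExtClosure.of X (h hx)
  | zero X hx => exact ExtClosure.zero X hx
  | iso X Y e _ ih => exact ExtClosure.iso X Y e ih
  | ext X₁ X₂ X₃ f g hseq _ _ ih₁ ih₃ => exact ExtClosure.ext X₁ X₂ X₃ f g hseq ih₁ ih₃

theorem hom_zero_of_filt {Tc : Set C} {Nb : C} (hME : IsMinimalExtending Tc Nb)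
    {X : C} (hX : ExtClosure {Nb} X) : ∀ W ∈ Tc, ∀ φ : W ⟶ X, φ = 0 := by
  induction hX with
  | of X h =>
    rw [Set.mem_singleton_iff] at h
    subst h
    exact fun W hW φ => hME.hom_zero hW φ
  | zero X h => exact fun W hW φ => h.eq_of_tgt φ 0
  | iso X Y e _ ih =>
    intro W hW φ
    have h2 := ih W hW (φ ≫ e.inv)
    have : φ = (φ ≫ e.inv) ≫ e.hom := by simp
    rw [this, h2, zero_comp]
  | ext X₁ X₂ X₃ f g hseq _ _ ih₁ ih₃ =>
    intro W hW φ
    obtain ⟨wfg, hse⟩ := hseq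
    haveI := hse.mono_f
    have hφg : φ ≫ g = 0 := ih₃ W hW (φ ≫ g)
    have hl := hse.exact.lift_f φ hφg
    have hz : hse.exact.lift φ hφg = 0 := ih₁ W hW _
    rw [← hl, hz, zero_comp]

end MGS9

/-- for a maximal green sequence with minimal extending bricks
`N i`, one has `Filt(N i) = T i ∩ F (i-1)` where `F (i-1)` is the torsion-free
class corresponding to `T (i-1)`. -/
theorem filt_brick_eq_torsion_inter_free
    {C : Type u} [Category.{v} C] [Abelian C]
    [∀ X : C, IsNoetherianObject X] [∀ X : C, IsArtinianObject X]
    (m : ℕ) (T : Fin (m + 1) → Set C) (hT : IsMGS m T) (N : Fin m → C)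
    (hN : ∀ i : Fin m, IsMinimalExtending (T i.castSucc) (N i) ∧
        T i.succ = {X : C | ExtClosure (T i.castSucc ∪ {N i}) X}) :
    ∀ i : Fin m, {X : C | ExtClosure {N i} X} =
      T i.succ ∩ {X : C | ∀ W ∈ T i.castSucc, ∀ f : W ⟶ X, f = 0} := by
  intro i
  obtain ⟨hME, hTi⟩ := hN i
  have hTc := hT.tors i.castSucc
  ext X
  constructor
  · intro hX
    refine ⟨?_, ?_⟩
    · rw [hTi]
      exact MGS9.extClosure_mono Set.subset_union_right hX
    · exact fun W hW φ => MGS9.hom_zero_of_filt hME hX W hW φ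
  · rintro ⟨hX1, hX2⟩
    rw [hTi] at hX1
    obtain ⟨W, X', a, b, hab, hW, hX'⟩ := MGS9.dec_of_mem_closure _ hTc _ hME hX1
    have ha : a = 0 := hX2 W hW a
    obtain ⟨wab, hse⟩ := hab
    haveI : Mono b := hse.exact.mono_g ha
    haveI : Epi b := hse.epi_g
    haveI : IsIso b := isIso_of_mono_of_epi b
    exact ExtClosure.iso X' X (asIso b).symm hX'
end

section
/- Let 0 = T₀ ⋖ T₁ ⋖ ⋯ ⋖ T_m = A be a maximal green sequence with associated bricks N₁,…,N_m (T_i = Filt(T_{i-1} ∪ {N_i})). Then every object X of A admits a filtration 0 = X₀ ⊆ X₁ ⊆ ⋯ ⊆ X_m = X with X_i/X_{i-1} ∈ Filt(N_i) for each i, and this filtration is unique up to isomorphism. -/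
open CategoryTheory CategoryTheory.Limits

universe v u

variable {C : Type u} [Category.{v} C] [Abelian C]

variable {P : Type*} [LinearOrder P]

/-! ### Auxiliary machinery for the proof -/

namespace MGSAux

variable {C : Type u} [Category.{v} C] [Abelian C]

section Basic

lemma isZero_of_epi_eq_zero {X Y : C} (g : X ⟶ Y) [Epi g] (h : g = 0) : IsZero Y := by
  rw [IsZero.iff_id_eq_zero]
  apply (cancel_epi g).1
  simp [h]

lemma isZero_of_mono_eq_zero {X Y : C} (f : X ⟶ Y) [Mono f] (h : f = 0) : IsZero X := by
  rw [IsZero.iff_id_eq_zero]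
  apply (cancel_mono f).1
  simp [h]

lemma _root_.IsSES.w'_s10 {X₁ X₂ X₃ : C} {f : X₁ ⟶ X₂} {g : X₂ ⟶ X₃} (h : IsSES f g) : f ≫ g = 0 :=
  h.choose

lemma _root_.IsSES.shortExact {X₁ X₂ X₃ : C} {f : X₁ ⟶ X₂} {g : X₂ ⟶ X₃} (h : IsSES f g) :
    (ShortComplex.mk f g h.w'_s10).ShortExact := h.choose_spec

lemma _root_.IsSES.mono_f {X₁ X₂ X₃ : C} {f : X₁ ⟶ X₂} {g : X₂ ⟶ X₃} (h : IsSES f g) : Mono f :=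
  h.shortExact.mono_f

lemma _root_.IsSES.epi_g {X₁ X₂ X₃ : C} {f : X₁ ⟶ X₂} {g : X₂ ⟶ X₃} (h : IsSES f g) : Epi g :=
  h.shortExact.epi_g

/-- `D1`: a mono together with its cokernel projection forms a short exact sequence. -/
lemma isSES_cokernel {A P : C} (f : A ⟶ P) [Mono f] : IsSES f (cokernel.π f) := by
  exact ⟨cokernel.condition f, ShortComplex.ShortExact.mk
    (ShortComplex.exact_of_f_is_kernel _
      (Abelian.monoIsKernelOfCokernel (CokernelCofork.ofπ (cokernel.π f)
        (cokernel.condition f)) (cokernelIsCokernel f)))⟩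

lemma _root_.IsSES.precomp_iso {A' A P W : C} (e : A' ≅ A) {f : A ⟶ P} {g : P ⟶ W}
    (h : IsSES f g) : IsSES (e.hom ≫ f) g := by
  obtain ⟨w, hse⟩ := h
  haveI := hse.mono_f
  haveI := hse.epi_g
  haveI : Mono (e.hom ≫ f) := mono_comp _ _
  have hw : (e.hom ≫ f) ≫ g = 0 := by rw [Category.assoc, w, comp_zero]
  refine ⟨hw, ?_⟩
  refine ShortComplex.ShortExact.mk (ShortComplex.exact_of_f_is_kernel _
    (KernelFork.IsLimit.ofι' (e.hom ≫ f) hw ?_))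
  intro Z k hk
  obtain ⟨l, hl⟩ := KernelFork.IsLimit.lift' hse.exact.fIsKernel k hk
  simp only [Fork.ι_ofι] at hl
  exact ⟨l ≫ e.inv, by simp only [Category.assoc, Iso.inv_hom_id_assoc]; exact hl⟩

lemma _root_.IsSES.postcomp_iso {A P W W' : C} (e : W ≅ W') {f : A ⟶ P} {g : P ⟶ W}
    (h : IsSES f g) : IsSES f (g ≫ e.hom) := by
  obtain ⟨w, hse⟩ := h
  haveI := hse.mono_f
  haveI := hse.epi_g
  haveI : Epi (g ≫ e.hom) := epi_comp _ _
  have hw : f ≫ g ≫ e.hom = 0 := by rw [← Category.assoc, w, zero_comp]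
  refine ⟨hw, ?_⟩
  refine ShortComplex.ShortExact.mk (ShortComplex.exact_of_g_is_cokernel _
    (CokernelCofork.IsColimit.ofπ' (g ≫ e.hom) hw ?_))
  intro Z k hk
  obtain ⟨l, hl⟩ := Cofork.IsColimit.desc' hse.exact.gIsCokernel k (by rw [hk, zero_comp])
  simp only [Cofork.π_ofπ] at hl
  exact ⟨e.inv ≫ l, by simp only [Category.assoc, Iso.hom_inv_id_assoc]; exact hl⟩

end Basic

section HomFree

/-- Objects receiving no nonzero morphism from `T`. -/
def HomFree (T : Set C) (Y : C) : Prop := ∀ V ∈ T, ∀ f : V ⟶ Y, f = 0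

lemma HomFree.of_mono {T : Set C} {E P : C} (hP : HomFree T P) (m : E ⟶ P) [Mono m] :
    HomFree T E := fun V hV f => by
  rw [← cancel_mono m, zero_comp]
  exact hP V hV (f ≫ m)

lemma HomFree.of_iso {T : Set C} {X Y : C} (e : X ≅ Y) (hX : HomFree T X) : HomFree T Y :=
  fun V hV f => by
  have h := hX V hV (f ≫ e.inv)
  calc f = (f ≫ e.inv) ≫ e.hom := by simp
  _ = 0 := by rw [h, zero_comp]

lemma homFree_of_isZero {T : Set C} {Y : C} (h : IsZero Y) : HomFree T Y :=
  fun _ _ f => h.eq_of_tgt f 0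

lemma HomFree.anti {T T' : Set C} {Y : C} (h : T' ⊆ T) (hY : HomFree T Y) : HomFree T' Y :=
  fun V hV f => hY V (h hV) f

lemma isZero_of_mem_of_homFree {T : Set C} {Z : C} (hZ : Z ∈ T) (hF : HomFree T Z) :
    IsZero Z := by
  rw [IsZero.iff_id_eq_zero]
  exact hF Z hZ (𝟙 Z)

lemma HomFree.ext {T : Set C} {X₁ X₂ X₃ : C} {f : X₁ ⟶ X₂} {g : X₂ ⟶ X₃}
    (hses : IsSES f g) (h1 : HomFree T X₁) (h3 : HomFree T X₃) : HomFree T X₂ := by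
  intro V hV u
  obtain ⟨w, hse⟩ := hses
  haveI := hse.mono_f
  haveI := hse.epi_g
  have hug : u ≫ g = 0 := h3 V hV (u ≫ g)
  obtain ⟨l, hl⟩ := KernelFork.IsLimit.lift' hse.exact.fIsKernel u hug
  simp only [Fork.ι_ofι] at hl
  rw [← hl, h1 V hV l, zero_comp]

lemma extClosure_subset {S S' : Set C} (h : S ⊆ S') :
    ∀ {Y : C}, ExtClosure S Y → ExtClosure S' Y := by
  intro Y hY
  induction hY with
  | of X hX => exact .of X (h hX)
  | zero X hX => exact .zero X hX
  | iso X Y e hX ih => exact .iso X Y e ih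
  | ext X₁ X₂ X₃ f g hseq h1 h3 ih1 ih3 => exact .ext X₁ X₂ X₃ f g hseq ih1 ih3

lemma homFree_extClosure {T S : Set C} (hS : ∀ s ∈ S, HomFree T s) :
    ∀ {Y : C}, ExtClosure S Y → HomFree T Y := by
  intro Y hY
  induction hY with
  | of X hX => exact hS X hX
  | zero X hX => exact homFree_of_isZero hX
  | iso X Y e hX ih => exact ih.of_iso e
  | ext X₁ X₂ X₃ f g hseq h1 h3 ih1 ih3 => exact HomFree.ext hseq ih1 ih3

lemma homFree_of_subobj {T : Set C} (hq : QuotClosed T) {Y : C}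
    (h : ∀ (V : C) (v : V ⟶ Y), Mono v → V ∈ T → IsZero V) : HomFree T Y := by
  intro V hV f
  have hI : image f ∈ T := hq (factorThruImage f) inferInstance hV
  have hz : IsZero (image f) := h _ (image.ι f) inferInstance hI
  rw [← image.fac f, hz.eq_of_src (image.ι f) 0, comp_zero]

end HomFree

section Diagram

/-- `D3`: pulling back a short exact sequence along a mono into the quotient. -/
lemma pullback_ses {A P W V : C} (f : A ⟶ P) (g : P ⟶ W) (hses : IsSES f g)
    (v : V ⟶ W) [Mono v] :
    ∃ k : A ⟶ pullback g v, k ≫ pullback.fst g v = f ∧ IsSES k (pullback.snd g v) := by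
  obtain ⟨w, hse⟩ := hses
  haveI := hse.mono_f
  haveI := hse.epi_g
  have hw0 : f ≫ g = (0 : A ⟶ V) ≫ v := by rw [w, zero_comp]
  refine ⟨pullback.lift f 0 hw0, pullback.lift_fst _ _ _, ?_⟩
  have hk : pullback.lift f 0 hw0 ≫ pullback.fst g v = f := pullback.lift_fst _ _ _
  have hk0 : pullback.lift f 0 hw0 ≫ pullback.snd g v = 0 := pullback.lift_snd _ _ _
  haveI : Mono (pullback.lift f 0 hw0) := by
    have : Mono (pullback.lift f 0 hw0 ≫ pullback.fst g v) := by
      rw [hk]; infer_instance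
    exact mono_of_mono (pullback.lift f 0 hw0) (pullback.fst g v)
  refine ⟨hk0, ?_⟩
  refine ShortComplex.ShortExact.mk (ShortComplex.exact_of_f_is_kernel _
    (KernelFork.IsLimit.ofι' (pullback.lift f 0 hw0) hk0 ?_))
  intro Z k' hk'
  have h2 : (k' ≫ pullback.fst g v) ≫ g = 0 := by
    rw [Category.assoc, pullback.condition, ← Category.assoc, hk', zero_comp]
  obtain ⟨l, hl⟩ := KernelFork.IsLimit.lift' hse.exact.fIsKernel (k' ≫ pullback.fst g v) h2
  simp only [Fork.ι_ofι] at hl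
  refine ⟨l, ?_⟩
  apply pullback.hom_ext
  · rw [Category.assoc, hk, hl]
  · rw [Category.assoc, hk0, comp_zero, hk']

/-- `D6` (Noether): given monos `u : A₁ ⟶ A` and `f : A ⟶ P`, there is a short exact
sequence `A/A₁ ⟶ P/A₁ ⟶ P/A`. -/
lemma coker_ses {A₁ A P : C} (u : A₁ ⟶ A) (f : A ⟶ P) [Mono u] [Mono f] :
    ∃ (α : cokernel u ⟶ cokernel (u ≫ f)) (β : cokernel (u ≫ f) ⟶ cokernel f),
      cokernel.π u ≫ α = f ≫ cokernel.π (u ≫ f) ∧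
      cokernel.π (u ≫ f) ≫ β = cokernel.π f ∧ IsSES α β := by
  haveI : Mono (u ≫ f) := mono_comp _ _
  have hα0 : u ≫ f ≫ cokernel.π (u ≫ f) = 0 := by
    rw [← Category.assoc]; exact cokernel.condition _
  have hβ0 : (u ≫ f) ≫ cokernel.π f = 0 := by
    rw [Category.assoc, cokernel.condition, comp_zero]
  refine ⟨cokernel.desc u (f ≫ cokernel.π (u ≫ f)) hα0, cokernel.desc (u ≫ f) (cokernel.π f) hβ0,
    cokernel.π_desc _ _ _, cokernel.π_desc _ _ _, ?_⟩
  set α := cokernel.desc u (f ≫ cokernel.π (u ≫ f)) hα0 with hαdef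
  set β := cokernel.desc (u ≫ f) (cokernel.π f) hβ0 with hβdef
  have hc1 : cokernel.π u ≫ α = f ≫ cokernel.π (u ≫ f) := cokernel.π_desc _ _ _
  have hc2 : cokernel.π (u ≫ f) ≫ β = cokernel.π f := cokernel.π_desc _ _ _
  have w0 : α ≫ β = 0 := by
    rw [← cancel_epi (cokernel.π u), comp_zero, ← Category.assoc, hc1, Category.assoc, hc2,
      cokernel.condition]
  haveI : Epi β := by
    have : Epi (cokernel.π (u ≫ f) ≫ β) := by rw [hc2]; infer_instance
    exact epi_of_epi (cokernel.π (u ≫ f)) β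
  haveI : Mono α := by
    apply Abelian.Pseudoelement.mono_of_zero_of_map_zero
    intro a ha
    obtain ⟨b, hb⟩ := Abelian.Pseudoelement.pseudo_surjective_of_epi (cokernel.π u) a
    have hfb : Abelian.Pseudoelement.pseudoApply (cokernel.π (u ≫ f))
        (Abelian.Pseudoelement.pseudoApply f b) = 0 := by
      rw [← Abelian.Pseudoelement.comp_apply, ← hc1, Abelian.Pseudoelement.comp_apply, hb, ha]
    obtain ⟨wc, hsec⟩ := isSES_cokernel (u ≫ f)
    obtain ⟨a₁, ha₁⟩ := Abelian.Pseudoelement.pseudo_exact_of_exact hsec.exact _ hfb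
    have hub : Abelian.Pseudoelement.pseudoApply u a₁ = b := by
      apply Abelian.Pseudoelement.pseudo_injective_of_mono f
      rw [← Abelian.Pseudoelement.comp_apply]
      exact ha₁
    rw [← hb, ← hub, ← Abelian.Pseudoelement.comp_apply, cokernel.condition]
    exact Abelian.Pseudoelement.zero_apply _ _
  refine ⟨w0, ?_⟩
  refine ShortComplex.ShortExact.mk (ShortComplex.exact_of_g_is_cokernel _
    (CokernelCofork.IsColimit.ofπ' β w0 ?_))
  intro Z k hk
  have hdesc0 : f ≫ cokernel.π (u ≫ f) ≫ k = 0 := by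
    rw [← Category.assoc, ← hc1, Category.assoc, hk, comp_zero]
  refine ⟨cokernel.desc f (cokernel.π (u ≫ f) ≫ k) hdesc0, ?_⟩
  rw [← cancel_epi (cokernel.π (u ≫ f)), ← Category.assoc, hc2, cokernel.π_desc]

end Diagram

section Core

/-- Key extension lemma: if `A ∈ Filt(N)` sits in a SES `A ⟶ P ⟶ W` with `W ∈ T` and
`P` receives no nonzero map from `T`, then `W = 0`. -/
lemma lemmaE {T : Set C} (hq : QuotClosed T) {Nb : C} (hmin : IsMinimalExtending T Nb)
    {A : C} (hA : ExtClosure {Nb} A) :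
    ∀ {P W : C} (f : A ⟶ P) (g : P ⟶ W), IsSES f g → W ∈ T → HomFree T P → IsZero W := by
  induction hA with
  | of A hA =>
    intro P W f g hses hW hP
    rw [Set.mem_singleton_iff] at hA
    subst hA
    obtain ⟨w, hse⟩ := id hses
    haveI := hse.mono_f
    haveI := hse.epi_g
    by_cases hr : ∃ r : P ⟶ A, f ≫ r = 𝟙 A
    · obtain ⟨r, hrr⟩ := hr
      have hp0 : f ≫ (𝟙 P - r ≫ f) = 0 := by
        rw [Preadditive.comp_sub, Category.comp_id, ← Category.assoc, hrr, Category.id_comp,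
          sub_self]
      obtain ⟨s, hs⟩ := Cofork.IsColimit.desc' hse.exact.gIsCokernel (𝟙 P - r ≫ f)
        (by rw [hp0, zero_comp])
      simp only [Cofork.π_ofπ] at hs
      have hsg : s ≫ g = 𝟙 W := by
        rw [← cancel_epi g, ← Category.assoc, hs, Preadditive.sub_comp, Category.id_comp,
          Category.assoc, w, comp_zero, sub_zero, Category.comp_id]
      have hs0 : s = 0 := hP W hW s
      rw [IsZero.iff_id_eq_zero, ← hsg, hs0, zero_comp]
    · have hPT : P ∈ T := hmin.ext_mem f g hses hW hr
      have hzP : IsZero P := isZero_of_mem_of_homFree hPT hP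
      exact isZero_of_epi_eq_zero g (hzP.eq_of_src g 0)
  | zero A hz =>
    intro P W f g hses hW hP
    obtain ⟨w, hse⟩ := id hses
    haveI := hse.epi_g
    have hf0 : f = 0 := hz.eq_of_src f 0
    haveI : Mono g := hse.exact.mono_g hf0
    haveI : IsIso g := isIso_of_mono_of_epi g
    have h0 : inv g = 0 := hP W hW (inv g)
    rw [IsZero.iff_id_eq_zero, ← IsIso.inv_hom_id g, h0, zero_comp]
  | iso A A' e hA ih =>
    intro P W f g hses hW hP
    exact ih (e.hom ≫ f) g (hses.precomp_iso e) hW hP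
  | ext A₁ A A₃ u wq hsesA h1 h3 ih1 ih3 =>
    intro P W f g hses hW hP
    obtain ⟨wA, hseA⟩ := id hsesA
    haveI := hseA.mono_f
    haveI := hseA.epi_g
    obtain ⟨wfg, hse⟩ := id hses
    haveI := hse.mono_f
    haveI := hse.epi_g
    haveI : Mono (u ≫ f) := mono_comp _ _
    have hQfree : HomFree T (cokernel (u ≫ f)) := by
      apply homFree_of_subobj hq
      intro V v hv hV
      haveI := hv
      obtain ⟨k, hk, hses'⟩ := pullback_ses (u ≫ f) (cokernel.π (u ≫ f)) (isSES_cokernel _) v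
      exact ih1 k (pullback.snd _ _) hses' hV (hP.of_mono (pullback.fst _ _))
    obtain ⟨α, β, hc1, hc2, hsesαβ⟩ := coker_ses u f
    let e3 : cokernel u ≅ A₃ :=
      IsColimit.coconePointUniqueUpToIso (cokernelIsCokernel u) hseA.exact.gIsCokernel
    let eW : cokernel f ≅ W :=
      IsColimit.coconePointUniqueUpToIso (cokernelIsCokernel f) hse.exact.gIsCokernel
    exact ih3 (e3.symm.hom ≫ α) (β ≫ eW.hom)
      ((hsesαβ.precomp_iso e3.symm).postcomp_iso eW) hW hQfree

/-- Key lemma: members of `Filt(T ∪ {N})` receiving no nonzero map from `T`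
lie in `Filt(N)`. -/
lemma lemmaL1 {T : Set C} (hTc : IsTorsionClass T) {Nb : C} (hmin : IsMinimalExtending T Nb)
    {Z : C} (hZ : ExtClosure (T ∪ {Nb}) Z) : HomFree T Z → ExtClosure {Nb} Z := by
  induction hZ with
  | of Z hZ =>
    intro hF
    rcases hZ with h | h
    · exact ExtClosure.zero _ (isZero_of_mem_of_homFree h hF)
    · exact ExtClosure.of _ h
  | zero Z h => exact fun _ => ExtClosure.zero _ h
  | iso Z Z' e h ih => exact fun hF => ExtClosure.iso _ _ e (ih (hF.of_iso e.symm))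
  | ext X₁ X₂ X₃ f g hses h1 h3 ih1 ih3 =>
    intro hF
    obtain ⟨w, hse⟩ := id hses
    haveI := hse.mono_f
    haveI := hse.epi_g
    have hN1 : ExtClosure {Nb} X₁ := ih1 (hF.of_mono f)
    have hF3 : HomFree T X₃ := by
      apply homFree_of_subobj hTc.quot_closed
      intro V v hv hV
      haveI := hv
      obtain ⟨k, hk, hses'⟩ := pullback_ses f g hses v
      exact lemmaE hTc.quot_closed hmin hN1 k (pullback.snd _ _) hses' hV
        (hF.of_mono (pullback.fst _ _))
    exact ExtClosure.ext _ _ _ f g hses hN1 (ih3 hF3)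

end Core

section Subobjects

/-- A maximal subobject lying in a torsion class (the torsion subobject). -/
lemma exists_max_subobject {T : Set C} (hTc : IsTorsionClass T) (X : C) [IsNoetherianObject X] :
    ∃ M : Subobject X, ((M : C) ∈ T) ∧ ∀ A : Subobject X, ((A : C) ∈ T) → A ≤ M := by
  have hbot : (((⊥ : Subobject X) : C)) ∈ T :=
    hTc.zero_mem _ ((isZero_zero C).of_iso Subobject.botCoeIsoZero)
  obtain ⟨M, hM, hmax⟩ := (wellFounded_gt (α := Subobject X)).has_min
    {A : Subobject X | ((A : C)) ∈ T} ⟨⊥, hbot⟩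
  refine ⟨M, hM, fun A hA => ?_⟩
  have hbi : (((A : C) ⊞ (M : C)) : C) ∈ T := by
    have hsplit : (ShortComplex.mk (biprod.inl : (A : C) ⟶ _)
        (biprod.snd : (A : C) ⊞ (M : C) ⟶ (M : C)) biprod.inl_snd).Splitting :=
      { r := biprod.fst
        s := biprod.inr
        f_r := biprod.inl_fst
        s_g := biprod.inr_snd
        id := biprod.total }
    exact hTc.ext_closed _ _ ⟨biprod.inl_snd, hsplit.shortExact⟩ hA hM
  have himg : image (biprod.desc A.arrow M.arrow) ∈ T :=
    hTc.quot_closed (factorThruImage _) inferInstance hbi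
  set d : ((A : C) ⊞ (M : C)) ⟶ X := biprod.desc A.arrow M.arrow with hd
  have hJmem : (((Subobject.mk (image.ι d) : Subobject X) : C)) ∈ T :=
    hTc.iso_closed (Subobject.underlyingIso (image.ι d)).symm himg
  have hMJ : M ≤ Subobject.mk (image.ι d) :=
    Subobject.le_mk_of_comm (biprod.inr ≫ factorThruImage d)
      (by rw [Category.assoc, image.fac, hd, biprod.inr_desc])
  have hAJ : A ≤ Subobject.mk (image.ι d) :=
    Subobject.le_mk_of_comm (biprod.inl ≫ factorThruImage d)
      (by rw [Category.assoc, image.fac, hd, biprod.inl_desc])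
  have hMeq : M = Subobject.mk (image.ι d) := by
    by_contra hne
    exact hmax _ hJmem (lt_of_le_of_ne hMJ hne)
  rw [hMeq]
  exact hAJ

/-- The quotient of consecutive torsion subobjects receives nothing from the smaller class. -/
lemma homFree_coker_ofLE {X : C} {T : Set C} (hTc : IsTorsionClass T)
    {A B : Subobject X} (hAB : A ≤ B) (hA : ((A : C)) ∈ T)
    (hmax : ∀ A' : Subobject X, ((A' : C)) ∈ T → A' ≤ A) :
    HomFree T (cokernel (Subobject.ofLE A B hAB)) := by
  set j := Subobject.ofLE A B hAB with hj
  have hjB : j ≫ B.arrow = A.arrow := Subobject.ofLE_arrow hAB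
  apply homFree_of_subobj hTc.quot_closed
  intro V v hv hV
  haveI := hv
  obtain ⟨k, hk, hses'⟩ := pullback_ses j (cokernel.π j) (isSES_cokernel j) v
  obtain ⟨w'_s10, hse'⟩ := id hses'
  haveI := hse'.mono_f
  haveI := hse'.epi_g
  have hE : (pullback (cokernel.π j) v) ∈ T :=
    hTc.ext_closed k (pullback.snd _ _) hses' hA hV
  haveI : Mono (pullback.fst (cokernel.π j) v) := inferInstance
  set mE : pullback (cokernel.π j) v ⟶ X := pullback.fst (cokernel.π j) v ≫ B.arrow with hmE
  haveI : Mono mE := mono_comp _ _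
  have hle : Subobject.mk mE ≤ A :=
    hmax _ (hTc.iso_closed (Subobject.underlyingIso mE).symm hE)
  set h' : pullback (cokernel.π j) v ⟶ (A : C) :=
    (Subobject.underlyingIso mE).inv ≫ Subobject.ofLE _ _ hle with hh'def
  have hh' : h' ≫ A.arrow = mE := by
    rw [hh'def, Category.assoc, Subobject.ofLE_arrow, Subobject.underlyingIso_arrow]
  have hkh : k ≫ h' = 𝟙 _ := by
    rw [← cancel_mono A.arrow, Category.assoc, hh', Category.id_comp, hmE, ← Category.assoc,
      hk, hjB]
  have hh'k : h' ≫ k = 𝟙 _ := by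
    rw [← cancel_mono mE, Category.id_comp]
    calc (h' ≫ k) ≫ mE = h' ≫ (k ≫ pullback.fst (cokernel.π j) v) ≫ B.arrow := by
          rw [hmE]; simp only [Category.assoc]
    _ = h' ≫ j ≫ B.arrow := by rw [hk]
    _ = h' ≫ A.arrow := by rw [hjB]
    _ = mE := hh'
  haveI : IsIso k := ⟨h', hkh, hh'k⟩
  have hsnd0 : pullback.snd (cokernel.π j) v = 0 := by
    rw [← cancel_epi k, comp_zero]
    exact w'_s10
  exact isZero_of_epi_eq_zero _ hsnd0

end Subobjects

section MGS

lemma T_mono {m : ℕ} {T : Fin (m + 1) → Set C} (hT : IsMGS m T) :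
    ∀ i j : Fin (m + 1), i ≤ j → T i ⊆ T j := by
  have step : ∀ k : Fin m, T k.castSucc ⊆ T k.succ := fun k => (hT.cover k).1
  have aux : ∀ (b : ℕ) (hb : b < m + 1) (a : ℕ) (ha : a < m + 1), a ≤ b →
      T ⟨a, ha⟩ ⊆ T ⟨b, hb⟩ := by
    intro b
    induction b with
    | zero =>
      intro hb a ha hab
      have : a = 0 := Nat.le_zero.mp hab
      subst this
      exact subset_rfl
    | succ b ih =>
      intro hb a ha hab
      by_cases hab' : a = b + 1
      · subst hab'
        exact subset_rfl
      · have hab2 : a ≤ b := Nat.lt_succ_iff.mp (Nat.lt_of_le_of_ne hab hab')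
        have hbm : b < m := Nat.lt_of_succ_lt_succ hb
        have hstep := step ⟨b, hbm⟩
        rw [Fin.castSucc_mk, Fin.succ_mk] at hstep
        exact subset_trans (ih (Nat.lt_of_succ_lt hb) a ha hab2) hstep
  intro i j hij
  have h := aux j.1 j.2 i.1 i.2 hij
  simpa only [Fin.eta] using h

end MGS

section Uniq

lemma uniq_iso_tors {m : ℕ} {T : Fin (m + 1) → Set C} (hT : IsMGS m T) {N : Fin m → C}
    (hN : ∀ i : Fin m, IsMinimalExtending (T i.castSucc) (N i) ∧
        T i.succ = {Y : C | ExtClosure (T i.castSucc ∪ {N i}) Y})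
    {X : C} (t : Fin (m + 1) → Subobject X)
    (ht1 : ∀ i, ((t i : C)) ∈ T i) (ht2 : ∀ (i) (A : Subobject X), ((A : C)) ∈ T i → A ≤ t i)
    (F : FiltrationOf X) (hlen : F.len = m)
    (hsub : ∀ i : Fin F.len, ExtClosure {N (Fin.cast hlen i)} (F.subquot i)) :
    ∀ i : Fin (m + 1), Nonempty (F.obj (Fin.cast (by omega) i) ≅ ((t i : C))) := by
  subst hlen
  have hTmono := T_mono hT
  let g : ∀ i : Fin (F.len + 1), F.obj i ⟶ X :=
    Fin.reverseInduction F.top.hom fun j r => F.map j ≫ r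
  have hglast : g (Fin.last F.len) = F.top.hom := Fin.reverseInduction_last
  have hgcast : ∀ j : Fin F.len, g j.castSucc = F.map j ≫ g j.succ := fun j =>
    Fin.reverseInduction_castSucc j
  have hsubq' : ∀ j : Fin F.len, ExtClosure {N j} (cokernel (F.map j)) := hsub
  have hmono : ∀ i, Mono (g i) := by
    intro i
    induction i using Fin.reverseInduction with
    | last => rw [hglast]; infer_instance
    | cast j ih =>
      rw [hgcast]
      haveI := F.mono j
      haveI := ih
      exact mono_comp _ _
  have hobjT : ∀ i, F.obj i ∈ T i := by
    intro i
    induction i using Fin.induction with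
    | zero => exact (hT.tors 0).zero_mem _ F.zero
    | succ j ih =>
      haveI := F.mono j
      have hq : cokernel (F.map j) ∈ T j.succ := by
        rw [(hN j).2]
        exact extClosure_subset (Set.subset_union_right) (hsubq' j)
      exact (hT.tors j.succ).ext_closed (F.map j) (cokernel.π (F.map j)) (isSES_cokernel _)
        (hTmono _ _ (Fin.castSucc_le_succ j) ih) hq
  have hcoker : ∀ i, HomFree (T i) (cokernel (g i)) := by
    intro i
    induction i using Fin.reverseInduction with
    | last =>
      haveI : Epi (g (Fin.last F.len)) := by rw [hglast]; infer_instance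
      exact homFree_of_isZero (isZero_of_epi_eq_zero _ (cokernel.π_of_epi _))
    | cast j ih =>
      haveI := F.mono j
      haveI := hmono j.succ
      obtain ⟨α, β, hc1, hc2, hses⟩ := coker_ses (F.map j) (g j.succ)
      have hNfree : HomFree (T j.castSucc) (N j) := fun V hV f => (hN j).1.hom_zero hV f
      have h1 : HomFree (T j.castSucc) (cokernel (F.map j)) := by
        refine homFree_extClosure ?_ (hsubq' j)
        intro s hs
        rw [Set.mem_singleton_iff] at hs
        subst hs
        exact hNfree
      have h3 : HomFree (T j.castSucc) (cokernel (g j.succ)) :=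
        ih.anti (hTmono _ _ (Fin.castSucc_le_succ j))
      have hres := HomFree.ext hses h1 h3
      rw [hgcast j]
      exact hres
  intro i
  haveI := hmono i
  have hle1 : Subobject.mk (g i) ≤ t i :=
    ht2 i _ ((hT.tors i).iso_closed (Subobject.underlyingIso (g i)).symm (hobjT i))
  have hz : (t i).arrow ≫ cokernel.π (g i) = 0 :=
    hcoker i _ (ht1 i) ((t i).arrow ≫ cokernel.π (g i))
  obtain ⟨l, hl⟩ := KernelFork.IsLimit.lift'
    (Abelian.monoIsKernelOfCokernel (CokernelCofork.ofπ (cokernel.π (g i))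
      (cokernel.condition (g i))) (cokernelIsCokernel (g i))) ((t i).arrow) hz
  simp only [Fork.ι_ofι] at hl
  have hle2 : t i ≤ Subobject.mk (g i) := Subobject.le_mk_of_comm l hl
  have heq : Subobject.mk (g i) = t i := le_antisymm hle1 hle2
  exact ⟨(Subobject.underlyingIso (g i)).symm ≪≫ Subobject.isoOfEq _ _ heq⟩

end Uniq

end MGSAux

/-- every object admits a filtration, unique up to isomorphism,
whose `i`-th subquotient lies in `Filt(N i)`, for the bricks `N i` associated to
a maximal green sequence. -/
theorem mgs_filtration_exists_unique
    {C : Type u} [Category.{v} C] [Abelian C]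
    [∀ X : C, IsNoetherianObject X] [∀ X : C, IsArtinianObject X]
    (m : ℕ) (T : Fin (m + 1) → Set C) (hT : IsMGS m T) (N : Fin m → C)
    (hN : ∀ i : Fin m, IsMinimalExtending (T i.castSucc) (N i) ∧
        T i.succ = {X : C | ExtClosure (T i.castSucc ∪ {N i}) X})
    (X : C) :
    (∃ (F : FiltrationOf X) (hlen : F.len = m),
        ∀ i : Fin F.len, ExtClosure {N (Fin.cast hlen i)} (F.subquot i)) ∧
    (∀ (F F' : FiltrationOf X) (hlen : F.len = m) (hlen' : F'.len = m),
        (∀ i : Fin F.len, ExtClosure {N (Fin.cast hlen i)} (F.subquot i)) →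
        (∀ i : Fin F'.len, ExtClosure {N (Fin.cast hlen' i)} (F'.subquot i)) →
        ∀ i : Fin (m + 1),
          Nonempty (F.obj (Fin.cast (by omega) i) ≅ F'.obj (Fin.cast (by omega) i))) := by
  classical
  have hTmono := MGSAux.T_mono hT
  have htors : ∀ i : Fin (m + 1), ∃ M : Subobject X, ((M : C)) ∈ T i ∧
      ∀ A : Subobject X, ((A : C)) ∈ T i → A ≤ M :=
    fun i => MGSAux.exists_max_subobject (hT.tors i) X
  choose t ht1 ht2 using htors
  have tle : ∀ i : Fin m, t i.castSucc ≤ t i.succ :=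
    fun i => ht2 _ _ (hTmono _ _ (Fin.castSucc_le_succ i) (ht1 _))
  have htop : t (Fin.last m) = ⊤ :=
    le_antisymm le_top (ht2 _ ⊤
      ((hT.tors _).iso_closed (asIso (⊤ : Subobject X).arrow).symm (hT.top X)))
  haveI : IsIso ((t (Fin.last m)).arrow) := (Subobject.isIso_arrow_iff_eq_top _).mpr htop
  refine ⟨⟨⟨m, fun i => ((t i : C)), fun i => Subobject.ofLE _ _ (tle i),
      fun i => inferInstance, hT.bot _ (ht1 0), asIso ((t (Fin.last m)).arrow)⟩, rfl, ?_⟩, ?_⟩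
  · intro i
    have hZT : cokernel (Subobject.ofLE _ _ (tle i)) ∈ T i.succ :=
      (hT.tors i.succ).quot_closed (cokernel.π _) inferInstance (ht1 i.succ)
    rw [(hN i).2] at hZT
    have hHF := MGSAux.homFree_coker_ofLE (hT.tors i.castSucc) (tle i) (ht1 _)
      (fun A' h => ht2 _ _ h)
    exact MGSAux.lemmaL1 (hT.tors i.castSucc) (hN i).1 hZT hHF
  · intro F F' hlen hlen' hsub hsub' i
    obtain ⟨e1⟩ := MGSAux.uniq_iso_tors hT hN t ht1 ht2 F hlen hsub i
    obtain ⟨e2⟩ := MGSAux.uniq_iso_tors hT hN t ht1 ht2 F' hlen' hsub' i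
    exact ⟨e1.trans e2.symm⟩
end

section
/- Let N₁,…,N_m be a complete forward hom-orthogonal sequence in an abelian length category A and set G_i = Filt(N₁,…,N_i). Then each N_i is a minimal extending object for G_{i-1}, G_i = Filt(G_{i-1} ∪ {N_i}), and 0 = G₀ ⋖ G₁ ⋖ ⋯ ⋖ G_m = A is a maximal green sequence. -/
open CategoryTheory CategoryTheory.Limits

universe v u

variable {C : Type u} [Category.{v} C] [Abelian C]

variable {P : Type*} [LinearOrder P]

set_option linter.unusedSectionVars false

namespace CFHOProof

variable {C : Type u} [Category.{v} C] [Abelian C]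

lemma isSES_of_mono {A B : C} (f : A ⟶ B) [Mono f] : IsSES f (cokernel.π f) :=
  ⟨cokernel.condition f,
    ShortComplex.ShortExact.mk'
      (ShortComplex.exact_of_g_is_cokernel _ (cokernelIsCokernel f))
      inferInstance inferInstance⟩

lemma isSES_of_epi {A B : C} (g : A ⟶ B) [Epi g] : IsSES (kernel.ι g) g :=
  ⟨kernel.condition g,
    ShortComplex.ShortExact.mk'
      (ShortComplex.exact_of_f_is_kernel _ (kernelIsKernel g))
      inferInstance inferInstance⟩

lemma ses_epi_g {X₁ X₂ X₃ : C} {f : X₁ ⟶ X₂} {g : X₂ ⟶ X₃} (h : IsSES f g) : Epi g :=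
  h.2.epi_g

lemma ses_mono_f {X₁ X₂ X₃ : C} {f : X₁ ⟶ X₂} {g : X₂ ⟶ X₃} (h : IsSES f g) : Mono f :=
  h.2.mono_f

lemma ses_desc {X₁ X₂ X₃ M : C} {f : X₁ ⟶ X₂} {g : X₂ ⟶ X₃} (h : IsSES f g)
    (u : X₂ ⟶ M) (hu : f ≫ u = 0) : ∃ v : X₃ ⟶ M, g ≫ v = u := by
  obtain ⟨w, hse⟩ := h
  have := hse.epi_g
  exact hse.exact.desc' u hu

lemma ses_isZero_mid {X₁ X₂ X₃ : C} {f : X₁ ⟶ X₂} {g : X₂ ⟶ X₃} (h : IsSES f g)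
    (h1 : IsZero X₁) (h3 : IsZero X₃) : IsZero X₂ := by
  obtain ⟨w, hse⟩ := h
  have := hse.mono_f
  obtain ⟨l, hl⟩ := hse.exact.lift' (𝟙 X₂) (h3.eq_of_tgt _ _)
  rw [IsZero.iff_id_eq_zero, ← hl, h1.eq_of_tgt l 0, zero_comp]

lemma isZero_of_epi_zero {A B : C} (p : A ⟶ B) [Epi p] (h : p = 0) : IsZero B := by
  rw [IsZero.iff_id_eq_zero, ← cancel_epi p, h]
  simp

lemma isIso_of_epi_of_comp_isIso {A B D : C} (p : A ⟶ B) (v : B ⟶ D) [Epi p]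
    (h : IsIso (p ≫ v)) : IsIso p := by
  have : Mono p := mono_of_mono_fac
    (show p ≫ (v ≫ inv (p ≫ v)) = 𝟙 A by rw [← Category.assoc, IsIso.hom_inv_id])
  exact isIso_of_mono_of_epi p

lemma isZero_of_mono_cokernel_π {I B : C} (m : I ⟶ B) [Mono m]
    (h : Mono (cokernel.π m)) : IsZero I := by
  have hm : m = 0 := by
    rw [← cancel_mono (cokernel.π m), cokernel.condition, zero_comp]
  rw [IsZero.iff_id_eq_zero, ← cancel_mono m, hm]
  simp

lemma extClosure_mono {S S' : Set C} (h : S ⊆ S') {X : C} (hX : ExtClosure S X) :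
    ExtClosure S' X := by
  induction hX with
  | of X hx => exact ExtClosure.of X (h hx)
  | zero X hx => exact ExtClosure.zero X hx
  | iso X Y e _ ih => exact ExtClosure.iso X Y e ih
  | ext X₁ X₂ X₃ f g hseq _ _ ih₁ ih₃ => exact ExtClosure.ext X₁ X₂ X₃ f g hseq ih₁ ih₃

lemma extClosure_bind {S S' : Set C} (h : ∀ Y ∈ S, ExtClosure S' Y) {X : C}
    (hX : ExtClosure S X) : ExtClosure S' X := by
  induction hX with
  | of X hx => exact h X hx
  | zero X hx => exact ExtClosure.zero X hx
  | iso X Y e _ ih => exact ExtClosure.iso X Y e ih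
  | ext X₁ X₂ X₃ f g hseq _ _ ih₁ ih₃ => exact ExtClosure.ext X₁ X₂ X₃ f g hseq ih₁ ih₃

lemma extClosure_hom_zero {S : Set C} {M : C} (h : ∀ Y ∈ S, ∀ f : Y ⟶ M, f = 0) {X : C}
    (hX : ExtClosure S X) : ∀ f : X ⟶ M, f = 0 := by
  induction hX with
  | of X hx => exact h X hx
  | zero X hx => exact fun f => hx.eq_of_src f 0
  | iso X Y e _ ih => intro f; rw [← cancel_epi e.hom, comp_zero]; exact ih (e.hom ≫ f)
  | ext X₁ X₂ X₃ f g hseq ih₁' ih₃' ih₁ ih₃ =>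
      intro u
      obtain ⟨v, hv⟩ := ses_desc hseq u (ih₁ (f ≫ u))
      rw [← hv, ih₃ v, comp_zero]

lemma mem_of_extClosure {T : Set C} (hT : IsTorsionClass T) {S : Set C}
    (h : ∀ Y ∈ S, Y ∈ T) {X : C} (hX : ExtClosure S X) : X ∈ T := by
  induction hX with
  | of X hx => exact h X hx
  | zero X hx => exact hT.zero_mem X hx
  | iso X Y e _ ih => exact hT.iso_closed e ih
  | ext X₁ X₂ X₃ f g hseq _ _ ih₁ ih₃ => exact hT.ext_closed f g hseq ih₁ ih₃

end CFHOProof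

namespace CFHOProof

variable {C : Type u} [Category.{v} C] [Abelian C]

private def pw {B : C} (f : B ⟶ B) : ℕ → (B ⟶ B)
  | 0 => 𝟙 B
  | n + 1 => f ≫ pw f n

omit [Abelian C] in
private lemma pw_mono {B : C} (f : B ⟶ B) [Mono f] : ∀ n, Mono (pw f n)
  | 0 => by dsimp [pw]; infer_instance
  | n + 1 => by dsimp [pw]; haveI := pw_mono f n; exact mono_comp _ _

lemma isIso_of_mono_endo {B : C} [IsArtinianObject B] (f : B ⟶ B) [Mono f] : IsIso f := by
  by_contra hf
  haveI : ∀ n, Mono (pw f n) := pw_mono f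
  have hanti : ∀ n : ℕ, Subobject.mk (pw f (n + 1)) < Subobject.mk (pw f n) := by
    intro n
    refine lt_of_le_of_ne (Subobject.mk_le_mk_of_comm f rfl) ?_
    intro hEq
    refine hf ?_
    have hcomm := Subobject.ofMkLEMk_comp hEq.le
    have : Subobject.ofMkLEMk (pw f (n + 1)) (pw f n) hEq.le = f := by
      rw [← cancel_mono (pw f n), hcomm]; rfl
    rw [← this]
    exact inferInstanceAs (IsIso (Subobject.isoOfMkEqMk (pw f (n+1)) (pw f n) hEq).hom)
  obtain ⟨_, ⟨n, rfl⟩, hmin⟩ := (wellFounded_lt (α := Subobject B)).has_min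
    (Set.range fun n => Subobject.mk (pw f n)) ⟨_, ⟨0, rfl⟩⟩
  exact hmin _ ⟨n + 1, rfl⟩ (hanti n)

/-- For an epi `p : X ⟶ B`, `B` is isomorphic to the cokernel of the kernel-subobject of `p`. -/
lemma cokernel_kernelSubobject_iso {X B : C} (p : X ⟶ B) [Epi p] :
    Nonempty (cokernel ((kernelSubobject p).arrow) ≅ B) := by
  refine ⟨cokernelIsoOfEq (kernelSubobject_arrow p).symm ≪≫
    cokernelEpiComp (kernelSubobjectIso p).hom (kernel.ι p) ≪≫
    (cokernelIsCokernel (kernel.ι p)).coconePointUniqueUpToIso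
      (Abelian.epiIsCokernelOfKernel (KernelFork.ofι (kernel.ι p) (kernel.condition p)) (kernelIsKernel p))⟩

lemma isZero_of_mono_zero {A B : C} (f : A ⟶ B) [Mono f] (h : f = 0) : IsZero A := by
  rw [IsZero.iff_id_eq_zero, ← cancel_mono f, h]
  simp

end CFHOProof

namespace CFHOProof

variable {C : Type u} [Category.{v} C] [Abelian C]

/-- Generators of the `i`-th torsion class. -/
def gens {m : ℕ} (N : Fin m → C) (i : ℕ) : Set C :=
  {Y : C | ∃ j : Fin m, j.val < i ∧ Y = N j}

lemma gens_mono {m : ℕ} (N : Fin m → C) {i i' : ℕ} (h : i ≤ i') :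
    gens N i ⊆ gens N i' := by
  rintro Y ⟨j, hj, rfl⟩
  exact ⟨j, lt_of_lt_of_le hj h, rfl⟩

lemma gens_hom_vanish {m : ℕ} {N : Fin m → C} (hN : IsCFHO m N) {i : ℕ} {l : Fin m}
    (hl : i ≤ l.val) : ∀ Y ∈ gens N i, ∀ u : Y ⟶ N l, u = 0 := by
  rintro Y ⟨j, hj, rfl⟩ u
  exact hN.forward_orth j l (Fin.lt_def.mpr (by omega)) u

variable [∀ X : C, IsNoetherianObject X] [∀ X : C, IsArtinianObject X]

/-- The key lemma: any object whose maps to all `N l`, `l ≥ i`, vanish lies in the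
`i`-th torsion class. -/
lemma main_R {m : ℕ} {N : Fin m → C} (hN : IsCFHO m N) :
    ∀ i : ℕ, i ≤ m → ∀ X : C, (∀ l : Fin m, i ≤ l.val → ∀ u : X ⟶ N l, u = 0) →
      ExtClosure (gens N i) X := by
  intro i
  induction i using Nat.strong_induction_on with
  | _ i IH =>
  intro him X hX
  by_contra hXG
  set G : Set C := {Z : C | ExtClosure (gens N i) Z} with hGdef
  have hXG' : X ∉ G := hXG
  -- choose a maximal kernel among quotients of X not in G
  have hKs : {K : Subobject X | cokernel K.arrow ∉ G}.Nonempty := by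
    refine ⟨kernelSubobject (𝟙 X), ?_⟩
    obtain ⟨e⟩ := cokernel_kernelSubobject_iso (𝟙 X)
    exact fun h => hXG' (ExtClosure.iso _ _ e h)
  obtain ⟨K, hK, hKmax⟩ := (wellFounded_gt (α := Subobject X)).has_min _ hKs
  have hBG : cokernel K.arrow ∉ G := hK
  have hBne : ¬ IsZero (cokernel K.arrow) := fun h => hBG (ExtClosure.zero _ h)
  -- every proper quotient of B lies in G
  have hquot : ∀ (B' : C) (q : cokernel K.arrow ⟶ B'), Epi q → ¬ Mono q → B' ∈ G := by
    intro B' q hq hqm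
    by_contra hB'
    haveI := hq
    obtain ⟨e⟩ := cokernel_kernelSubobject_iso (cokernel.π K.arrow ≫ q)
    have hK' : kernelSubobject (cokernel.π K.arrow ≫ q) ∈
        {K : Subobject X | cokernel K.arrow ∉ G} :=
      fun h => hB' (ExtClosure.iso _ _ e h)
    have hle : K ≤ kernelSubobject (cokernel.π K.arrow ≫ q) := by
      refine Subobject.le_of_comm (factorThruKernelSubobject _ K.arrow ?_) ?_
      · rw [← Category.assoc, cokernel.condition, zero_comp]
      · exact factorThruKernelSubobject_comp_arrow _ _ _
    have hne : K ≠ kernelSubobject (cokernel.π K.arrow ≫ q) := by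
      intro hEq
      refine hqm (Abelian.mono_of_kernel_ι_eq_zero q ?_)
      have harr : (kernelSubobject (cokernel.π K.arrow ≫ q)).arrow ≫ cokernel.π K.arrow = 0 := by
        rw [← hEq]; exact cokernel.condition _
      have h1 : kernel.ι (cokernel.π K.arrow ≫ q) ≫ cokernel.π K.arrow = 0 := by
        rw [← kernelSubobject_arrow' (cokernel.π K.arrow ≫ q), Category.assoc, harr, comp_zero]
      have h2 : pullback.snd (kernel.ι q) (cokernel.π K.arrow) ≫ cokernel.π K.arrow ≫ q = 0 := by
        rw [← Category.assoc, ← pullback.condition, Category.assoc, kernel.condition, comp_zero]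
      have h4 : pullback.snd (kernel.ι q) (cokernel.π K.arrow) ≫ cokernel.π K.arrow = 0 := by
        rw [← kernel.lift_ι (cokernel.π K.arrow ≫ q) _ h2, Category.assoc, h1, comp_zero]
      have h5 : pullback.fst (kernel.ι q) (cokernel.π K.arrow) ≫ kernel.ι q = 0 := by
        rw [pullback.condition, h4]
      exact (cancel_epi (pullback.fst (kernel.ι q) (cokernel.π K.arrow))).mp
        (by rw [h5, comp_zero])
    exact hKmax _ hK' (lt_of_le_of_ne hle hne)
  -- B is a brick
  have hbrick : IsBrick (cokernel K.arrow) := by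
    refine ⟨hBne, fun f => ?_⟩
    by_cases hf0 : f = 0
    · exact Or.inl hf0
    refine Or.inr ?_
    by_cases hmono : Mono (Abelian.factorThruImage f)
    · haveI : IsIso (Abelian.factorThruImage f) := isIso_of_mono_of_epi _
      have : Mono f := by
        rw [← Abelian.image.fac f]
        exact mono_comp _ _
      exact isIso_of_mono_endo f
    · exfalso
      have hIG : Abelian.image f ∈ G :=
        hquot _ (Abelian.factorThruImage f) inferInstance hmono
      have hIne : ¬ IsZero (Abelian.image f) := by
        intro hz
        refine hf0 ?_
        rw [← Abelian.image.fac f, hz.eq_of_tgt (Abelian.factorThruImage f) 0, zero_comp]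
      have hqm' : ¬ Mono (cokernel.π (Abelian.image.ι f)) :=
        fun h => hIne (isZero_of_mono_cokernel_π _ h)
      have hcok : cokernel (Abelian.image.ι f) ∈ G :=
        hquot _ (cokernel.π (Abelian.image.ι f)) inferInstance hqm'
      exact hBG (ExtClosure.ext _ _ _ _ _ (isSES_of_mono (Abelian.image.ι f)) hIG hcok)
  -- homs to the tail vanish
  have hBhom : ∀ j : Fin m, i ≤ j.val → ∀ u : cokernel K.arrow ⟶ N j, u = 0 := by
    intro l hl u
    have h0 := hX l hl (cokernel.π K.arrow ≫ u)
    exact (cancel_epi (cokernel.π K.arrow)).mp (by rw [h0, comp_zero])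
  -- homs from the head vanish
  have hNB : ∀ j : Fin m, j.val < i → ∀ h : N j ⟶ cokernel K.arrow, h = 0 := by
    intro j hj h
    by_contra hh
    have hIne : ¬ IsZero (Abelian.image h) := by
      intro hz
      refine hh ?_
      rw [← Abelian.image.fac h, hz.eq_of_tgt (Abelian.factorThruImage h) 0, zero_comp]
    have hIG : Abelian.image h ∈ G := by
      by_cases hmono : Mono (Abelian.factorThruImage h)
      · haveI : IsIso (Abelian.factorThruImage h) := isIso_of_mono_of_epi _
        exact ExtClosure.iso _ _ (asIso (Abelian.factorThruImage h))
          (ExtClosure.of _ ⟨j, hj, rfl⟩)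
      · have hvanish : ∀ l : Fin m, j.val ≤ l.val → ∀ u : Abelian.image h ⟶ N l, u = 0 := by
          intro l hl u
          rcases lt_or_eq_of_le hl with hlt | heq
          · have h0 : Abelian.factorThruImage h ≫ u = 0 :=
              hN.forward_orth j l (Fin.lt_def.mpr hlt) _
            exact (cancel_epi (Abelian.factorThruImage h)).mp (by rw [h0, comp_zero])
          · have hlj : l = j := Fin.ext heq.symm
            subst hlj
            rcases (hN.brick l).2 (Abelian.factorThruImage h ≫ u) with h0 | hiso
            · exact (cancel_epi (Abelian.factorThruImage h)).mp (by rw [h0, comp_zero])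
            · exact absurd (isIso_of_epi_of_comp_isIso _ u hiso)
                (fun hi => hmono (by infer_instance))
        have := IH j.val hj (by omega) (Abelian.image h) hvanish
        exact extClosure_mono (gens_mono N hj.le) this
    have hqm' : ¬ Mono (cokernel.π (Abelian.image.ι h)) :=
      fun hc => hIne (isZero_of_mono_cokernel_π _ hc)
    have hcok : cokernel (Abelian.image.ι h) ∈ G :=
      hquot _ (cokernel.π (Abelian.image.ι h)) inferInstance hqm'
    exact hBG (ExtClosure.ext _ _ _ _ _ (isSES_of_mono (Abelian.image.ι h)) hIG hcok)
  exact hN.maximal ⟨cokernel K.arrow, i, him, hbrick, hNB, hBhom⟩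

end CFHOProof

namespace CFHOProof

variable {C : Type u} [Category.{v} C] [Abelian C]
variable [∀ X : C, IsNoetherianObject X] [∀ X : C, IsArtinianObject X]

lemma comp_cokernelπ_imageι {A B : C} (a : A ⟶ B) :
    a ≫ cokernel.π (Abelian.image.ι a) = 0 := by
  have h := congrArg (fun t => Abelian.factorThruImage a ≫ t)
    (cokernel.condition (Abelian.image.ι a))
  simp only [comp_zero] at h
  rw [← Category.assoc, Abelian.image.fac] at h
  exact h

lemma quot_step {m : ℕ} {N : Fin m → C} (hN : IsCFHO m N) {i : ℕ} (hi : i ≤ m) :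
    ∀ X : C, ExtClosure (gens N i) X →
      ∀ (Y : C) (p : X ⟶ Y), Epi p → ExtClosure (gens N i) Y := by
  intro X hX
  induction hX with
  | of X hx =>
    obtain ⟨j, hj, rfl⟩ := hx
    intro Y p hp
    by_cases hmono : Mono p
    · haveI := hp
      haveI : IsIso p := isIso_of_mono_of_epi p
      exact ExtClosure.iso _ _ (asIso p) (ExtClosure.of _ ⟨j, hj, rfl⟩)
    · haveI := hp
      have hvanish : ∀ l : Fin m, j.val ≤ l.val → ∀ u : Y ⟶ N l, u = 0 := by
        intro l hl u
        rcases lt_or_eq_of_le hl with hlt | heq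
        · have h0 : p ≫ u = 0 := hN.forward_orth j l (Fin.lt_def.mpr hlt) _
          exact (cancel_epi p).mp (by rw [h0, comp_zero])
        · have hlj : l = j := Fin.ext heq.symm
          subst hlj
          rcases (hN.brick l).2 (p ≫ u) with h0 | hiso
          · exact (cancel_epi p).mp (by rw [h0, comp_zero])
          · exact absurd (isIso_of_epi_of_comp_isIso _ u hiso)
              (fun hI => hmono (by infer_instance))
      exact extClosure_mono (gens_mono N hj.le)
        (main_R hN j.val (by omega) Y hvanish)
  | zero X hx =>
    intro Y p hp
    haveI := hp
    exact ExtClosure.zero _ (isZero_of_epi_zero p (hx.eq_of_src p 0))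
  | iso X X' e _ ih =>
    intro Y p hp
    haveI := hp
    exact ih Y (e.hom ≫ p) (epi_comp _ _)
  | ext X₁ X₂ X₃ f g hseq _ _ ih₁ ih₃ =>
    intro Y p hp
    haveI := hp
    have hIG : ExtClosure (gens N i) (Abelian.image (f ≫ p)) :=
      ih₁ _ (Abelian.factorThruImage (f ≫ p)) inferInstance
    have h0 : f ≫ p ≫ cokernel.π (Abelian.image.ι (f ≫ p)) = 0 := by
      rw [← Category.assoc]
      exact comp_cokernelπ_imageι (f ≫ p)
    obtain ⟨w, hw⟩ := ses_desc hseq (p ≫ cokernel.π (Abelian.image.ι (f ≫ p))) h0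
    haveI : Epi (p ≫ cokernel.π (Abelian.image.ι (f ≫ p))) := epi_comp _ _
    haveI : Epi w := epi_of_epi_fac hw
    have hY3 : ExtClosure (gens N i) (cokernel (Abelian.image.ι (f ≫ p))) :=
      ih₃ _ w inferInstance
    exact ExtClosure.ext _ _ _ _ _ (isSES_of_mono (Abelian.image.ι (f ≫ p))) hIG hY3

lemma torsion_G {m : ℕ} {N : Fin m → C} (hN : IsCFHO m N) {i : ℕ} (hi : i ≤ m) :
    IsTorsionClass {Z : C | ExtClosure (gens N i) Z} where
  zero_mem := fun X h => ExtClosure.zero X h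
  iso_closed := fun X Y e h => ExtClosure.iso X Y e h
  ext_closed := fun _ _ _ f g hseq h₁ h₃ => ExtClosure.ext _ _ _ f g hseq h₁ h₃
  quot_closed := fun X Y p hp hX => quot_step hN hi X hX Y p hp

lemma bot_zero {m : ℕ} {N : Fin m → C} :
    ∀ X : C, ExtClosure (gens N 0) X → IsZero X := by
  intro X hX
  induction hX with
  | of X hx => obtain ⟨j, hj, _⟩ := hx; omega
  | zero X hx => exact hx
  | iso X Y e _ ih => exact ih.of_iso e.symm
  | ext X₁ X₂ X₃ f g hseq _ _ ih₁ ih₃ => exact ses_isZero_mid hseq ih₁ ih₃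

end CFHOProof

open CFHOProof in
/-- a complete forward hom-orthogonal sequence induces a maximal
green sequence via the extension closures of initial segments, and each brick is
a minimal extending object for the preceding torsion class. -/
theorem cfho_induces_mgs
    {C : Type u} [Category.{v} C] [Abelian C]
    [∀ X : C, IsNoetherianObject X] [∀ X : C, IsArtinianObject X]
    (m : ℕ) (N : Fin m → C) (hN : IsCFHO m N)
    (G : Fin (m + 1) → Set C)
    (hG : ∀ i : Fin (m + 1),
        G i = {X : C | ExtClosure {Y : C | ∃ j : Fin m, j.val < i.val ∧ Y = N j} X}) :
    (∀ i : Fin m, IsMinimalExtending (G i.castSucc) (N i)) ∧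
    (∀ i : Fin m, G i.succ = {X : C | ExtClosure (G i.castSucc ∪ {N i}) X}) ∧
    IsMGS m G := by
  classical
  have hGe : ∀ i : Fin (m + 1), G i = {Z : C | ExtClosure (gens N i.val) Z} := hG
  have partA : ∀ i : Fin m, IsMinimalExtending (G i.castSucc) (N i) := by
    intro i
    rw [hGe i.castSucc]
    constructor
    · -- proper quotients
      intro Y p hp hpi
      haveI := hp
      refine main_R hN i.val i.isLt.le Y ?_
      intro l hl u
      rcases lt_or_eq_of_le hl with hlt | heq
      · have h0 : p ≫ u = 0 := hN.forward_orth i l (Fin.lt_def.mpr hlt) _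
        exact (cancel_epi p).mp (by rw [h0, comp_zero])
      · have hli : l = i := Fin.ext heq.symm
        subst hli
        rcases (hN.brick l).2 (p ≫ u) with h0 | hiso
        · exact (cancel_epi p).mp (by rw [h0, comp_zero])
        · exact absurd (isIso_of_epi_of_comp_isIso _ u hiso) hpi
    · -- extensions
      intro Xx Tt f g hseq hTt hnr
      refine main_R hN i.val i.isLt.le Xx ?_
      intro l hl u
      rcases lt_or_eq_of_le hl with hlt | heq
      · have h0 : f ≫ u = 0 := hN.forward_orth i l (Fin.lt_def.mpr hlt) _
        obtain ⟨v, hv⟩ := ses_desc hseq u h0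
        rw [← hv, extClosure_hom_zero (gens_hom_vanish hN hl) hTt v, comp_zero]
      · have hli : l = i := Fin.ext heq.symm
        subst hli
        rcases (hN.brick l).2 (f ≫ u) with h0 | hiso
        · obtain ⟨v, hv⟩ := ses_desc hseq u h0
          rw [← hv, extClosure_hom_zero (gens_hom_vanish hN hl) hTt v, comp_zero]
        · exact absurd ⟨u ≫ inv (f ≫ u), by rw [← Category.assoc, IsIso.hom_inv_id]⟩ hnr
    · -- hom zero
      intro W hW u
      exact extClosure_hom_zero (gens_hom_vanish hN (le_refl i.val)) hW u
  have partB : ∀ i : Fin m, G i.succ = {X : C | ExtClosure (G i.castSucc ∪ {N i}) X} := by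
    intro i
    rw [hGe i.succ, hGe i.castSucc]
    ext Z
    constructor
    · intro hZ
      refine extClosure_bind ?_ hZ
      rintro Y ⟨j, hj, rfl⟩
      have hj' : j.val < i.val + 1 := by simpa using hj
      rcases Nat.lt_succ_iff_lt_or_eq.mp hj' with h | h
      · exact ExtClosure.of _ (Or.inl (ExtClosure.of _ ⟨j, h, rfl⟩))
      · have hji : j = i := Fin.ext h
        subst hji
        exact ExtClosure.of _ (Or.inr rfl)
    · intro hZ
      refine extClosure_bind ?_ hZ
      rintro Y (hY | hY)
      · exact extClosure_mono (gens_mono N (by simp)) hY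
      · rw [Set.mem_singleton_iff.mp hY]
        exact ExtClosure.of _ ⟨i, by simp, rfl⟩
  refine ⟨partA, partB, ?_, ?_, ?_, ?_⟩
  · -- torsion classes
    intro i
    rw [hGe i]
    exact torsion_G hN (Nat.lt_succ_iff.mp i.isLt)
  · -- bottom
    intro X hX
    rw [hGe 0] at hX
    have hX' : ExtClosure (gens N 0) X := by simpa using hX
    exact bot_zero X hX'
  · -- top
    intro X
    rw [hGe (Fin.last m)]
    refine hN.generates _ (torsion_G hN ?_) ?_ X
    · simp
    · intro j
      exact ExtClosure.of _ ⟨j, by simpa using j.isLt, rfl⟩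
  · -- covers
    intro i
    have hsub : G i.castSucc ⊆ G i.succ := by
      rw [hGe i.castSucc, hGe i.succ]
      intro Z hZ
      exact extClosure_mono (gens_mono N (by simp)) hZ
    have hNi_mem : N i ∈ G i.succ := by
      rw [hGe i.succ]
      exact ExtClosure.of _ ⟨i, by simp, rfl⟩
    have hNi_not : N i ∉ G i.castSucc := by
      rw [hGe i.castSucc]
      intro hmem
      have h0 := extClosure_hom_zero (gens_hom_vanish hN (le_refl i.val)) hmem (𝟙 (N i))
      exact (hN.brick i).1 ((IsZero.iff_id_eq_zero _).mpr h0)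
    refine ⟨hsub, ?_, ?_⟩
    · intro hEq
      exact hNi_not (by rw [hEq]; exact hNi_mem)
    · intro S hS hTS hST
      by_cases hSe : S = G i.castSucc
      · exact Or.inl hSe
      refine Or.inr ?_
      have hns : ¬ S ⊆ G i.castSucc := fun h => hSe (Set.Subset.antisymm h hTS)
      obtain ⟨X, hXS, hXT⟩ := Set.not_subset.mp hns
      have hXT' : ¬ ExtClosure (gens N i.val) X := by
        rw [hGe i.castSucc] at hXT; exact hXT
      have hXG' : ExtClosure (gens N (i.val + 1)) X := by
        have := hST hXS
        rw [hGe i.succ] at this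
        exact this
      have hexu : ¬ ∀ l : Fin m, i.val ≤ l.val → ∀ u : X ⟶ N l, u = 0 :=
        fun hall => hXT' (main_R hN i.val i.isLt.le X hall)
      push_neg at hexu
      obtain ⟨l, hl, u, hu⟩ := hexu
      have hli : l = i := by
        refine Fin.ext ?_
        rcases lt_or_eq_of_le hl with hlt | heq
        · exact absurd (extClosure_hom_zero
            (gens_hom_vanish hN (show i.val + 1 ≤ l.val by omega)) hXG' u) hu
        · omega
      subst hli
      have hIS : Abelian.image u ∈ S :=
        hS.quot_closed (Abelian.factorThruImage u) inferInstance hXS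
      have hNiS : N l ∈ S := by
        by_cases hι : IsIso (Abelian.image.ι u)
        · exact hS.iso_closed (asIso (Abelian.image.ι u)) hIS
        · have hucoker : ∀ l' : Fin m, l.val ≤ l'.val →
              ∀ v : cokernel (Abelian.image.ι u) ⟶ N l', v = 0 := by
            intro l' hl' v
            rcases lt_or_eq_of_le hl' with hlt | heq
            · have h0 : cokernel.π (Abelian.image.ι u) ≫ v = 0 :=
                hN.forward_orth l l' (Fin.lt_def.mpr hlt) _
              exact (cancel_epi (cokernel.π (Abelian.image.ι u))).mp (by rw [h0, comp_zero])
            · have hl'i : l' = l := Fin.ext heq.symm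
              subst hl'i
              rcases (hN.brick l').2 (cokernel.π (Abelian.image.ι u) ≫ v) with h0 | hiso
              · exact (cancel_epi (cokernel.π (Abelian.image.ι u))).mp (by rw [h0, comp_zero])
              · exfalso
                haveI : IsIso (cokernel.π (Abelian.image.ι u)) :=
                  isIso_of_epi_of_comp_isIso _ v hiso
                have hι0 : Abelian.image.ι u = 0 := by
                  rw [← cancel_mono (cokernel.π (Abelian.image.ι u)), cokernel.condition,
                    zero_comp]
                have hzI : IsZero (Abelian.image u) := isZero_of_mono_zero _ hι0
                refine hu ?_
                rw [← Abelian.image.fac u, hzI.eq_of_tgt (Abelian.factorThruImage u) 0,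
                  zero_comp]
          have hcokT : cokernel (Abelian.image.ι u) ∈ G l.castSucc := by
            rw [hGe l.castSucc]
            exact main_R hN l.val l.isLt.le _ hucoker
          exact hS.ext_closed _ _ (isSES_of_mono (Abelian.image.ι u)) hIS (hTS hcokT)
      refine Set.Subset.antisymm hST ?_
      rw [hGe l.succ]
      intro Z hZ
      refine mem_of_extClosure hS ?_ hZ
      rintro Y ⟨j, hj, rfl⟩
      have hj' : j.val < l.val + 1 := by simpa using hj
      rcases Nat.lt_succ_iff_lt_or_eq.mp hj' with h | h
      · refine hTS ?_
        rw [hGe l.castSucc]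
        exact ExtClosure.of _ ⟨j, h, rfl⟩
      · have hji : j = l := Fin.ext h
        subst hji
        exact hNiS
end
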